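/- arXiv:1807.02881 — 3 statements merged into one kernel-verified Lean document; each statement's English description precedes it below -/
import Mathlib

section
/- Suppose that I_i ∘ G_{n−1−i} ⊆ R ∘ F_B for every i = 0, 1, …, n−1. Then π : C → B is surjective with ker π = t·C (i.e. the sequence k → A → C → B → k is coexact), and C is a free extension of A = k[t]/(t^n) with fiber B; in particular C is a free A-module via ι. -/
open MvPolynomial

noncomputable section

variable {k : Type*} [Field k]

open Classical in
/-- Contraction action of `g ∈ k[x_1,…]` on `F ∈ k[X_1,…]`: the monomial `x^a` sends
`X^b` to `X^(b-a)` if `a ≤ b` and to `0` otherwise, extended bilinearly. -/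
def contract {σ : Type*} (g F : MvPolynomial σ k) : MvPolynomial σ k :=
  ∑ a ∈ g.support, ∑ b ∈ F.support,
    if a ≤ b then monomial (b - a) (g.coeff a * F.coeff b) else 0

/-- The annihilator `Ann(F) = {g : g ∘ F = 0}` (a set; it is in fact an ideal). -/
def annSet {σ : Type*} (F : MvPolynomial σ k) : Set (MvPolynomial σ k) :=
  {g | contract g F = 0}

/-- The annihilator ideal of `F` (since `annSet F` is closed under the ideal operations,
the span coincides with it). -/
def annIdeal {σ : Type*} (F : MvPolynomial σ k) : Ideal (MvPolynomial σ k) :=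
  Ideal.span (annSet F)

/-- `C` is a free module over `A` via the ring map `ι : A → C`. -/
def freeVia {A C : Type*} [CommRing A] [CommRing C] (ι : A →+* C) : Prop :=
  @Module.Free A C _ _ (Module.compHom C ι)

variable {σ : Type*}

theorem coeff_contract_superset (g F : MvPolynomial σ k) {s : Finset (σ →₀ ℕ)}
    (hs : g.support ⊆ s) (c : σ →₀ ℕ) :
    coeff c (contract g F) = ∑ a ∈ s, g.coeff a * F.coeff (a + c) := by
  classical
  rw [contract]
  rw [coeff_sum]
  have step1 : ∀ a ∈ g.support,
      coeff c (∑ b ∈ F.support, if a ≤ b then monomial (b - a) (g.coeff a * F.coeff b) else 0)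
        = g.coeff a * F.coeff (a + c) := by
    intro a _
    rw [coeff_sum]
    have : ∀ b ∈ F.support,
        coeff c (if a ≤ b then monomial (b - a) (g.coeff a * F.coeff b) else 0)
          = if b = a + c then g.coeff a * F.coeff b else 0 := by
      intro b _
      split_ifs with h1 h2
      · rw [h2] at h1 ⊢
        rw [coeff_monomial, if_pos]
        simp
      · rw [coeff_monomial, if_neg]
        intro hba
        exact h2 (by rw [← hba, add_comm, tsub_add_cancel_of_le h1])
      · rename_i h3
        exact absurd (h3 ▸ (le_add_self.trans_eq (add_comm _ _)) : a ≤ b) h1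
      · simp
    rw [Finset.sum_congr rfl this, Finset.sum_ite_eq' F.support (a + c)
      (fun b => g.coeff a * F.coeff b)]
    split_ifs with h
    · rfl
    · rw [notMem_support_iff.mp h, mul_zero]
  rw [Finset.sum_congr rfl step1]
  apply Finset.sum_subset hs
  intro a _ ha
  rw [notMem_support_iff.mp ha, zero_mul]

theorem coeff_contract (g F : MvPolynomial σ k) (c : σ →₀ ℕ) :
    coeff c (contract g F) = ∑ a ∈ g.support, g.coeff a * F.coeff (a + c) :=
  coeff_contract_superset g F subset_rfl c

theorem contract_zero_left (F : MvPolynomial σ k) : contract (0 : MvPolynomial σ k) F = 0 := by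
  apply MvPolynomial.ext; intro c
  rw [coeff_contract]
  simp

theorem contract_zero_right (g : MvPolynomial σ k) : contract g (0 : MvPolynomial σ k) = 0 := by
  apply MvPolynomial.ext; intro c
  rw [coeff_contract]
  simp

theorem contract_add_left (g g' F : MvPolynomial σ k) :
    contract (g + g') F = contract g F + contract g' F := by
  classical
  apply MvPolynomial.ext; intro c
  rw [coeff_add,
    coeff_contract_superset (g + g') F (s := g.support ∪ g'.support)
      (MvPolynomial.support_add),
    coeff_contract_superset g F (s := g.support ∪ g'.support) Finset.subset_union_left,
    coeff_contract_superset g' F (s := g.support ∪ g'.support) Finset.subset_union_right,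
    ← Finset.sum_add_distrib]
  refine Finset.sum_congr rfl fun a _ => ?_
  rw [coeff_add, add_mul]

theorem contract_add_right (g F F' : MvPolynomial σ k) :
    contract g (F + F') = contract g F + contract g F' := by
  apply MvPolynomial.ext; intro c
  rw [coeff_add, coeff_contract, coeff_contract, coeff_contract, ← Finset.sum_add_distrib]
  refine Finset.sum_congr rfl fun a _ => ?_
  rw [coeff_add, mul_add]

theorem contract_smul_left (l : k) (g F : MvPolynomial σ k) :
    contract (l • g) F = l • contract g F := by
  apply MvPolynomial.ext; intro c
  rw [MvPolynomial.coeff_smul,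
    coeff_contract_superset (l • g) F (s := g.support) (MvPolynomial.support_smul),
    coeff_contract, smul_eq_mul, Finset.mul_sum]
  refine Finset.sum_congr rfl fun a _ => ?_
  rw [MvPolynomial.coeff_smul, smul_eq_mul, mul_assoc]

theorem contract_smul_right (l : k) (g F : MvPolynomial σ k) :
    contract g (l • F) = l • contract g F := by
  apply MvPolynomial.ext; intro c
  rw [MvPolynomial.coeff_smul, coeff_contract, coeff_contract, smul_eq_mul, Finset.mul_sum]
  refine Finset.sum_congr rfl fun a _ => ?_
  rw [MvPolynomial.coeff_smul]
  rw [smul_eq_mul]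
  ring

theorem contract_sum_right {α : Type*} (g : MvPolynomial σ k) (s : Finset α)
    (f : α → MvPolynomial σ k) :
    contract g (∑ i ∈ s, f i) = ∑ i ∈ s, contract g (f i) := by
  classical
  induction s using Finset.induction_on with
  | empty => simp [contract_zero_right]
  | insert _ _ h ih => rw [Finset.sum_insert h, Finset.sum_insert h, contract_add_right, ih]

theorem contract_sum_left {α : Type*} (s : Finset α) (f : α → MvPolynomial σ k)
    (F : MvPolynomial σ k) :
    contract (∑ i ∈ s, f i) F = ∑ i ∈ s, contract (f i) F := by
  classical
  induction s using Finset.induction_on with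
  | empty => simp [contract_zero_left]
  | insert _ _ h ih => rw [Finset.sum_insert h, Finset.sum_insert h, contract_add_left, ih]

theorem coeff_contract_monomial (a : σ →₀ ℕ) (v : k) (F : MvPolynomial σ k) (c : σ →₀ ℕ) :
    coeff c (contract (monomial a v) F) = v * F.coeff (a + c) := by
  classical
  rw [coeff_contract_superset (monomial a v) F (s := {a}) support_monomial_subset,
    Finset.sum_singleton, coeff_monomial, if_pos rfl]

theorem contract_monomial_monomial (a b : σ →₀ ℕ) (u v : k) :
    contract (monomial a u) (monomial b v)
      = if a ≤ b then monomial (b - a) (u * v) else 0 := by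
  classical
  apply MvPolynomial.ext; intro c
  rw [coeff_contract_monomial]
  by_cases hab : a ≤ b
  · rw [if_pos hab, coeff_monomial, coeff_monomial]
    by_cases hc : b - a = c
    · rw [if_pos hc, if_pos (by rw [← hc, add_comm, tsub_add_cancel_of_le hab])]
    · rw [if_neg hc, if_neg (fun hb => hc (by rw [hb, add_comm a c, add_tsub_cancel_right])),
        mul_zero]
  · rw [if_neg hab, coeff_monomial, coeff_zero,
      if_neg (fun hb => hab (by rw [hb]; exact le_self_add)), mul_zero]

theorem contract_mul (p q F : MvPolynomial σ k) :
    contract (p * q) F = contract p (contract q F) := by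
  classical
  induction p using MvPolynomial.induction_on' with
  | add p1 p2 hp1 hp2 =>
    rw [add_mul, contract_add_left, hp1, hp2, contract_add_left]
  | monomial a u =>
    induction q using MvPolynomial.induction_on' with
    | add q1 q2 hq1 hq2 =>
      rw [mul_add, contract_add_left, hq1, hq2, contract_add_left, contract_add_right]
    | monomial b v =>
      rw [monomial_mul]
      apply MvPolynomial.ext; intro c
      rw [coeff_contract_monomial, coeff_contract_monomial, coeff_contract_monomial]
      rw [add_comm a b, add_assoc, mul_assoc]

theorem contract_contract_comm (p q F : MvPolynomial σ k) :
    contract p (contract q F) = contract q (contract p F) := by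
  rw [← contract_mul, mul_comm, contract_mul]

theorem mem_annIdeal_iff {F g : MvPolynomial σ k} :
    g ∈ annIdeal F ↔ contract g F = 0 := by
  classical
  constructor
  · intro hg
    let J : Ideal (MvPolynomial σ k) :=
      { carrier := annSet F
        zero_mem' := contract_zero_left F
        add_mem' := fun {a b} ha hb => by
          have : contract (a + b) F = 0 := by
            rw [contract_add_left, ha, hb, add_zero]
          exact this
        smul_mem' := fun c x hx => by
          have : contract (c * x) F = 0 := by
            rw [contract_mul, hx, contract_zero_right]
          exact this }
    have : annIdeal F ≤ J := Ideal.span_le.mpr fun x hx => hx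
    exact this hg
  · intro h
    exact Ideal.subset_span h
section OptionSide

variable {σ : Type*}

private theorem mapD_none (u : σ →₀ ℕ) : Finsupp.mapDomain Option.some u none = 0 :=
  Finsupp.mapDomain_notin_range _ _ (by simp)

private theorem mapD_some (u : σ →₀ ℕ) (i : σ) :
    Finsupp.mapDomain Option.some u (some i) = u i :=
  Finsupp.mapDomain_apply (Option.some_injective σ) u i

private theorem sing_some (a : ℕ) (i : σ) :
    Finsupp.single (none : Option σ) a (some i) = 0 :=
  Finsupp.single_eq_of_ne (by simp)

private theorem f1 (u v : σ →₀ ℕ) (a : ℕ) :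
    Finsupp.mapDomain Option.some u ≤ Finsupp.single none a + Finsupp.mapDomain Option.some v
      ↔ u ≤ v := by
  constructor
  · intro h i
    have := h (some i)
    rwa [Finsupp.add_apply, mapD_some, mapD_some, sing_some, zero_add] at this
  · intro h o
    match o with
    | none => rw [mapD_none]; exact Nat.zero_le _
    | some i =>
      rw [Finsupp.add_apply, mapD_some, mapD_some, sing_some, zero_add]
      exact h i

private theorem f2 (u v : σ →₀ ℕ) (a : ℕ) :
    (Finsupp.single (none : Option σ) a + Finsupp.mapDomain Option.some v)
        - Finsupp.mapDomain Option.some u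
      = Finsupp.single none a + Finsupp.mapDomain Option.some (v - u) := by
  ext o
  rw [Finsupp.tsub_apply, Finsupp.add_apply, Finsupp.add_apply]
  match o with
  | none => rw [mapD_none, mapD_none, mapD_none, Nat.sub_zero]
  | some i =>
    rw [mapD_some, mapD_some, mapD_some, sing_some, zero_add, zero_add, Finsupp.tsub_apply]

private theorem f3 (v : σ →₀ ℕ) (a j : ℕ) :
    Finsupp.single (none : Option σ) j
        ≤ Finsupp.single none a + Finsupp.mapDomain Option.some v ↔ j ≤ a := by
  constructor
  · intro h
    have := h none
    rwa [Finsupp.add_apply, mapD_none, add_zero, Finsupp.single_eq_same,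
      Finsupp.single_eq_same] at this
  · intro h o
    match o with
    | none =>
      rw [Finsupp.add_apply, mapD_none, add_zero, Finsupp.single_eq_same,
        Finsupp.single_eq_same]
      exact h
    | some i => rw [sing_some]; exact Nat.zero_le _

private theorem f4 (v : σ →₀ ℕ) (a j : ℕ) :
    (Finsupp.single (none : Option σ) a + Finsupp.mapDomain Option.some v)
        - Finsupp.single none j
      = Finsupp.single none (a - j) + Finsupp.mapDomain Option.some v := by
  ext o
  rw [Finsupp.tsub_apply, Finsupp.add_apply, Finsupp.add_apply]
  match o with
  | none =>
    rw [mapD_none, add_zero, add_zero, Finsupp.single_eq_same, Finsupp.single_eq_same,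
      Finsupp.single_eq_same]
  | some i => simp [sing_some]

private theorem tpow_mul_rename_monomial (a : ℕ) (v : σ →₀ ℕ) (d : k) :
    (X none : MvPolynomial (Option σ) k) ^ a * rename Option.some (monomial v d)
      = monomial (Finsupp.single none a + Finsupp.mapDomain Option.some v) d := by
  rw [rename_monomial, X_pow_eq_monomial, monomial_mul, one_mul]

theorem contract_rename_tpow_mul (g G : MvPolynomial σ k) (a : ℕ) :
    contract (rename Option.some g) ((X none : MvPolynomial (Option σ) k) ^ a
        * rename Option.some G)
      = X none ^ a * rename Option.some (contract g G) := by
  classical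
  induction g using MvPolynomial.induction_on' with
  | add p1 p2 h1 h2 =>
    rw [map_add, contract_add_left, h1, h2, contract_add_left, map_add, mul_add]
  | monomial u c =>
    induction G using MvPolynomial.induction_on' with
    | add q1 q2 h1 h2 =>
      rw [map_add, mul_add, contract_add_right, h1, h2, contract_add_right, map_add, mul_add]
    | monomial v d =>
      rw [tpow_mul_rename_monomial, rename_monomial, contract_monomial_monomial,
        contract_monomial_monomial]
      by_cases huv : u ≤ v
      · rw [if_pos ((f1 u v a).mpr huv), if_pos huv, f2, ← tpow_mul_rename_monomial,
          rename_monomial]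
      · rw [if_neg (fun hh => huv ((f1 u v a).mp hh)), if_neg huv, map_zero, mul_zero]

theorem contract_tpow_tpow_mul (G : MvPolynomial σ k) (a j : ℕ) :
    contract ((X none : MvPolynomial (Option σ) k) ^ j)
        ((X none : MvPolynomial (Option σ) k) ^ a * rename Option.some G)
      = if j ≤ a then (X none : MvPolynomial (Option σ) k) ^ (a - j) * rename Option.some G
        else 0 := by
  classical
  induction G using MvPolynomial.induction_on' with
  | add q1 q2 h1 h2 =>
    rw [map_add, mul_add, contract_add_right, h1, h2]
    split_ifs with h
    · rw [mul_add]
    · rw [add_zero]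
  | monomial v d =>
    rw [tpow_mul_rename_monomial, X_pow_eq_monomial, contract_monomial_monomial]
    by_cases hja : j ≤ a
    · rw [if_pos ((f3 v a j).mpr hja), if_pos hja, f4, one_mul, tpow_mul_rename_monomial]
    · rw [if_neg (fun hh => hja ((f3 v a j).mp hh)), if_neg hja]

theorem contract_tpow_rename_mul (g G : MvPolynomial σ k) (a j : ℕ) :
    contract ((X none : MvPolynomial (Option σ) k) ^ j * rename Option.some g)
        ((X none : MvPolynomial (Option σ) k) ^ a * rename Option.some G)
      = if j ≤ a then
          (X none : MvPolynomial (Option σ) k) ^ (a - j) * rename Option.some (contract g G)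
        else 0 := by
  rw [contract_mul, contract_rename_tpow_mul, contract_tpow_tpow_mul]

end OptionSide
section FmSection

variable {σ : Type*}

/-- `Fm G m = ∑_{i<m} t^{m-1-i} · G_i`. -/
def Fm (G : ℕ → MvPolynomial σ k) (m : ℕ) : MvPolynomial (Option σ) k :=
  ∑ i ∈ Finset.range m, (X none : MvPolynomial (Option σ) k) ^ (m - 1 - i)
    * rename Option.some (G i)

theorem contract_tpow_Fm (G : ℕ → MvPolynomial σ k) (j m : ℕ) :
    contract ((X none : MvPolynomial (Option σ) k) ^ j) (Fm G m) = Fm G (m - j) := by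
  classical
  rw [Fm, contract_sum_right, Fm]
  have h1 : ∀ i ∈ Finset.range m,
      contract ((X none : MvPolynomial (Option σ) k) ^ j)
          ((X none : MvPolynomial (Option σ) k) ^ (m - 1 - i) * rename Option.some (G i))
        = if j ≤ m - 1 - i then
            (X none : MvPolynomial (Option σ) k) ^ (m - 1 - i - j) * rename Option.some (G i)
          else 0 := fun i _ => contract_tpow_tpow_mul (G i) (m - 1 - i) j
  rw [Finset.sum_congr rfl h1]
  rw [← Finset.sum_subset (Finset.range_subset_range.mpr (Nat.sub_le m j))
    (fun i hi hni => by
      rw [if_neg]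
      rw [Finset.mem_range] at hi
      rw [Finset.mem_range, not_lt] at hni
      omega)]
  refine Finset.sum_congr rfl fun i hi => ?_
  rw [Finset.mem_range] at hi
  rw [if_pos (by omega), show m - 1 - i - j = m - j - 1 - i by omega]

theorem contract_combo_Fm (G : ℕ → MvPolynomial σ k) (rr : ℕ → MvPolynomial σ k) (N m : ℕ) :
    contract (∑ j ∈ Finset.range N,
        (X none : MvPolynomial (Option σ) k) ^ j * rename Option.some (rr j)) (Fm G m)
      = ∑ d ∈ Finset.range m, (X none : MvPolynomial (Option σ) k) ^ (m - 1 - d)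
          * rename Option.some
            (∑ j ∈ Finset.range N, if j ≤ d then contract (rr j) (G (d - j)) else 0) := by
  classical
  rw [contract_sum_left]
  have swap : ∑ d ∈ Finset.range m, (X none : MvPolynomial (Option σ) k) ^ (m - 1 - d)
      * rename Option.some
        (∑ j ∈ Finset.range N, if j ≤ d then contract (rr j) (G (d - j)) else 0)
      = ∑ j ∈ Finset.range N, ∑ d ∈ Finset.range m,
          (X none : MvPolynomial (Option σ) k) ^ (m - 1 - d)
            * rename Option.some (if j ≤ d then contract (rr j) (G (d - j)) else 0) := by
    rw [Finset.sum_comm]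
    refine Finset.sum_congr rfl fun d _ => ?_
    rw [map_sum, Finset.mul_sum]
  rw [swap]
  refine Finset.sum_congr rfl fun j _ => ?_
  -- per-j identity
  rw [Fm, contract_sum_right]
  have h1 : ∀ i ∈ Finset.range m,
      contract ((X none : MvPolynomial (Option σ) k) ^ j * rename Option.some (rr j))
          ((X none : MvPolynomial (Option σ) k) ^ (m - 1 - i) * rename Option.some (G i))
        = if j ≤ m - 1 - i then
            (X none : MvPolynomial (Option σ) k) ^ (m - 1 - i - j)
              * rename Option.some (contract (rr j) (G i))
          else 0 := fun i _ => contract_tpow_rename_mul (rr j) (G i) (m - 1 - i) j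
  rw [Finset.sum_congr rfl h1]
  -- LHS = sum over range (m - j)
  rw [← Finset.sum_subset (Finset.range_subset_range.mpr (Nat.sub_le m j))
    (fun i hi hni => by
      rw [if_neg]
      rw [Finset.mem_range] at hi
      rw [Finset.mem_range, not_lt] at hni
      omega)]
  -- RHS: kill the d < j terms
  rw [show (Finset.range m) = Finset.Ico 0 m from (Finset.range_eq_Ico m).symm ▸ rfl]
  rw [← Finset.sum_subset (Finset.Ico_subset_Ico (Nat.zero_le j) (le_refl m) :
      Finset.Ico j m ⊆ Finset.Ico 0 m)
    (fun d hd hnd => by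
      rw [Finset.mem_Ico] at hd hnd
      rw [if_neg (by omega), map_zero, mul_zero])]
  rw [Finset.sum_Ico_eq_sum_range]
  refine (Finset.sum_congr rfl fun i hi => ?_)
  rw [Finset.mem_range] at hi
  rw [if_pos (by omega), if_pos (Nat.le_add_right j i), Nat.add_sub_cancel_left,
    show m - 1 - (j + i) = m - 1 - i - j by omega]

theorem optionEquivLeft_rename_some (p : MvPolynomial σ k) :
    optionEquivLeft k σ (rename Option.some p) = Polynomial.C p := by
  have : (optionEquivLeft k σ).toAlgHom.comp (rename (Option.some : σ → Option σ))
      = Polynomial.CAlgHom (R := k) (A := MvPolynomial σ k) := by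
    apply MvPolynomial.algHom_ext
    intro i
    simp [optionEquivLeft_X_some, Polynomial.CAlgHom]
  exact congrFun (congrArg (fun f => f.toFun) this) p

theorem sum_tpow_rename_eq_zero {M : ℕ} {H : ℕ → MvPolynomial σ k}
    (h : (∑ d ∈ Finset.range M,
      (X none : MvPolynomial (Option σ) k) ^ d * rename Option.some (H d)) = 0) :
    ∀ d < M, H d = 0 := by
  classical
  intro d hd
  have h2 : (optionEquivLeft k σ) (∑ d ∈ Finset.range M,
      (X none : MvPolynomial (Option σ) k) ^ d * rename Option.some (H d)) = 0 := by
    rw [h, map_zero]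
  rw [map_sum] at h2
  have h3 : ∀ e ∈ Finset.range M,
      (optionEquivLeft k σ) ((X none : MvPolynomial (Option σ) k) ^ e
          * rename Option.some (H e))
        = Polynomial.monomial e (H e) := by
    intro e _
    rw [map_mul, map_pow, optionEquivLeft_X_none, optionEquivLeft_rename_some, mul_comm,
      Polynomial.C_mul_X_pow_eq_monomial]
  rw [Finset.sum_congr rfl h3] at h2
  have h4 := congrArg (fun p => Polynomial.coeff p d) h2
  simp only [Polynomial.finset_sum_coeff, Polynomial.coeff_monomial] at h4
  rwa [Finset.sum_ite_eq' (Finset.range M) d H, if_pos (Finset.mem_range.mpr hd)] at h4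

theorem exists_decomp (s : MvPolynomial (Option σ) k) :
    ∃ (N : ℕ) (rr : ℕ → MvPolynomial σ k), ∀ M, N ≤ M →
      s = ∑ j ∈ Finset.range M,
        (X none : MvPolynomial (Option σ) k) ^ j * rename Option.some (rr j) := by
  classical
  set p := optionEquivLeft k σ s with hp
  refine ⟨p.natDegree + 1, fun j => p.coeff j, fun M hM => ?_⟩
  apply (optionEquivLeft k σ).injective
  rw [map_sum]
  have h3 : ∀ e ∈ Finset.range M,
      (optionEquivLeft k σ) ((X none : MvPolynomial (Option σ) k) ^ e
          * rename Option.some (p.coeff e))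
        = Polynomial.monomial e (p.coeff e) := by
    intro e _
    rw [map_mul, map_pow, optionEquivLeft_X_none, optionEquivLeft_rename_some, mul_comm,
      Polynomial.C_mul_X_pow_eq_monomial]
  rw [Finset.sum_congr rfl h3, ← hp]
  exact Polynomial.as_sum_range' p M (by omega)

end FmSection
section Core

variable {σ : Type*}

theorem contract_neg_right (g F : MvPolynomial σ k) : contract g (-F) = -contract g F := by
  have := contract_smul_right (-1 : k) g F
  rwa [neg_one_smul, neg_one_smul] at this

/-- Characterization (sufficiency direction) of membership in the iterated colon ideal. -/
theorem mem_I_of_forall (G : ℕ → MvPolynomial σ k) (I : ℕ → Ideal (MvPolynomial σ k))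
    (hI0 : I 0 = annIdeal (G 0))
    (hIsucc : ∀ i, I (i + 1) = (I i).colon (annIdeal (G (i + 1))))
    (f : MvPolynomial σ k) :
    ∀ d : ℕ, (∀ a : Fin d → MvPolynomial σ k,
      (∀ i : Fin d, contract (a i) (G (i.1 + 1)) = 0) →
        contract (f * ∏ i, a i) (G 0) = 0) → f ∈ I d := by
  intro d
  induction d generalizing f with
  | zero =>
    intro h
    rw [hI0, mem_annIdeal_iff]
    have := h (fun i => i.elim0) (fun i => i.elim0)
    rwa [Finset.univ_eq_empty, Finset.prod_empty, mul_one] at this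
  | succ d ih =>
    intro h
    rw [hIsucc d]
    refine Submodule.mem_colon.mpr fun p hp => ?_
    rw [smul_eq_mul]
    apply ih
    intro a ha
    have hp' : contract p (G (d + 1)) = 0 := mem_annIdeal_iff.mp hp
    have key := h (Fin.snoc a p) (fun i => by
      refine Fin.lastCases ?_ (fun j => ?_) i
      · rw [Fin.snoc_last]
        simpa using hp'
      · rw [Fin.snoc_castSucc]
        simpa using ha j)
    rw [Fin.prod_snoc] at key
    rw [show f * p * ∏ i, a i = f * ((∏ i, a i) * p) by ring]
    exact key

theorem I_mono (G : ℕ → MvPolynomial σ k) (I : ℕ → Ideal (MvPolynomial σ k))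
    (hIsucc : ∀ i, I (i + 1) = (I i).colon (annIdeal (G (i + 1))))
    {i j : ℕ} (hij : i ≤ j) : I i ≤ I j := by
  induction j with
  | zero => rw [Nat.le_zero.mp hij]
  | succ j ih =>
    rcases Nat.lt_or_ge i (j+1) with h | h
    · refine le_trans (ih (by omega)) ?_
      rw [hIsucc j]
      intro f hf
      exact Submodule.mem_colon.mpr fun p _ => by
        rw [smul_eq_mul]; exact Ideal.mul_mem_right p _ hf
    · rw [Nat.le_antisymm hij h]

/-- Claim B : if the level-`d` relation holds, then `rr d ∈ I d`. -/
theorem claimB (G : ℕ → MvPolynomial σ k) (I : ℕ → Ideal (MvPolynomial σ k))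
    (hI0 : I 0 = annIdeal (G 0))
    (hIsucc : ∀ i, I (i + 1) = (I i).colon (annIdeal (G (i + 1))))
    (rr : ℕ → MvPolynomial σ k) (d : ℕ)
    (hlev : ∑ j ∈ Finset.range (d + 1), contract (rr j) (G (d - j)) = 0) :
    rr d ∈ I d := by
  classical
  apply mem_I_of_forall G I hI0 hIsucc
  intro a ha
  rw [Finset.sum_range_succ, Nat.sub_self] at hlev
  have hsplit : contract (rr d) (G 0)
      = -∑ j ∈ Finset.range d, contract (rr j) (G (d - j)) :=
    eq_neg_of_add_eq_zero_right hlev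
  rw [mul_comm, contract_mul, hsplit, contract_neg_right, contract_sum_right, neg_eq_zero]
  apply Finset.sum_eq_zero
  intro j hj
  rw [Finset.mem_range] at hj
  have hd : d - j - 1 < d := by omega
  set i₀ : Fin d := ⟨d - j - 1, hd⟩ with hi₀
  have hprod : (∏ i, a i) = a i₀ * ∏ i ∈ Finset.univ.erase i₀, a i :=
    (Finset.mul_prod_erase _ _ (Finset.mem_univ _)).symm
  have ha0 : contract (a i₀) (G (d - j)) = 0 := by
    have := ha i₀
    rwa [hi₀, show d - j - 1 + 1 = d - j by omega] at this
  rw [← contract_mul, hprod,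
    show a i₀ * (∏ i ∈ Finset.univ.erase i₀, a i) * rr j
      = ((∏ i ∈ Finset.univ.erase i₀, a i) * rr j) * a i₀ by ring,
    contract_mul, ha0, contract_zero_right]

end Core
section Extend

variable {σ : Type*}

theorem contract_neg_left (g F : MvPolynomial σ k) : contract (-g) F = -contract g F := by
  have := contract_smul_left (-1 : k) g F
  rwa [neg_one_smul, neg_one_smul] at this

theorem extend_exists (G : ℕ → MvPolynomial σ k) (I : ℕ → Ideal (MvPolynomial σ k))
    (hI0 : I 0 = annIdeal (G 0))
    (hIsucc : ∀ i, I (i + 1) = (I i).colon (annIdeal (G (i + 1))))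
    (n : ℕ)
    (hmain : ∀ i < n, ∀ g ∈ I i, ∃ h : MvPolynomial σ k,
      contract g (G (n - 1 - i)) = contract h (G 0))
    (m : ℕ) (rr : ℕ → MvPolynomial σ k)
    (hcond : ∀ d < m, ∑ j ∈ Finset.range (d + 1), contract (rr j) (G (d - j)) = 0) :
    ∃ rr' : ℕ → MvPolynomial σ k, (∀ j < m, rr' j = rr j) ∧
      (∀ d < n, ∑ j ∈ Finset.range (d + 1), contract (rr' j) (G (d - j)) = 0) := by
  classical
  suffices H : ∀ D, D ≤ n → ∃ rr' : ℕ → MvPolynomial σ k, (∀ j < m, rr' j = rr j) ∧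
      (∀ d < D, ∑ j ∈ Finset.range (d + 1), contract (rr' j) (G (d - j)) = 0) by
    obtain ⟨rr', h1, h2⟩ := H n le_rfl
    exact ⟨rr', h1, h2⟩
  intro D
  induction D with
  | zero => exact fun _ => ⟨rr, fun _ _ => rfl, fun d hd => absurd hd (Nat.not_lt_zero d)⟩
  | succ D ih =>
    intro hDn
    obtain ⟨rr', h1, h2⟩ := ih (by omega)
    by_cases hDm : D < m
    · refine ⟨rr', h1, fun d hd => ?_⟩
      rcases Nat.lt_or_ge d D with h | h
      · exact h2 d h
      · have hdD : d = D := by omega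
        subst hdD
        have : ∑ j ∈ Finset.range (d + 1), contract (rr' j) (G (d - j))
            = ∑ j ∈ Finset.range (d + 1), contract (rr j) (G (d - j)) := by
          refine Finset.sum_congr rfl fun j hj => ?_
          rw [Finset.mem_range] at hj
          rw [h1 j (by omega)]
        rw [this]
        exact hcond d hDm
    · -- D ≥ m : construct the correction term
      push_neg at hDm
      have hmem : ∀ j < D, rr' j ∈ I j := fun j hj =>
        claimB G I hI0 hIsucc rr' j (h2 j hj)
      have hspec : ∀ j, j < D → ∃ h : MvPolynomial σ k,
          contract (rr' j) (G (D - j)) = contract h (G 0) := by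
        intro j hj
        have hj2 : rr' j ∈ I (n - 1 - (D - j)) :=
          I_mono G I hIsucc (by omega) (hmem j hj)
        have := hmain (n - 1 - (D - j)) (by omega) (rr' j) hj2
        rwa [show n - 1 - (n - 1 - (D - j)) = D - j by omega] at this
      set hfun : ℕ → MvPolynomial σ k := fun j =>
        if hj : j < D then (hspec j hj).choose else 0 with hhfun
      set newval : MvPolynomial σ k := -(∑ j ∈ Finset.range D, hfun j) with hnewval
      refine ⟨Function.update rr' D newval, fun j hj => ?_, fun d hd => ?_⟩
      · rw [Function.update_of_ne (by omega)]
        exact h1 j hj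
      · rcases Nat.lt_or_ge d D with h | h
        · have : ∑ j ∈ Finset.range (d + 1), contract (Function.update rr' D newval j)
              (G (d - j)) = ∑ j ∈ Finset.range (d + 1), contract (rr' j) (G (d - j)) := by
            refine Finset.sum_congr rfl fun j hj => ?_
            rw [Finset.mem_range] at hj
            rw [Function.update_of_ne (by omega)]
          rw [this]
          exact h2 d h
        · have hdD : d = D := by omega
          subst hdD
          rw [Finset.sum_range_succ, Nat.sub_self, Function.update_self]
          have e1 : ∑ j ∈ Finset.range d, contract (Function.update rr' d newval j)
              (G (d - j)) = ∑ j ∈ Finset.range d, contract (rr' j) (G (d - j)) := by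
            refine Finset.sum_congr rfl fun j hj => ?_
            rw [Finset.mem_range] at hj
            rw [Function.update_of_ne (by omega)]
          have e2 : contract newval (G 0)
              = -∑ j ∈ Finset.range d, contract (rr' j) (G (d - j)) := by
            rw [hnewval, contract_neg_left, contract_sum_left, neg_inj]
            refine Finset.sum_congr rfl fun j hj => ?_
            rw [Finset.mem_range] at hj
            rw [hhfun]
            simp only [dif_pos hj]
            exact ((hspec j hj).choose_spec).symm
          rw [e1, e2, add_neg_cancel]

end Extend
section Helpers

variable {σ : Type*}

theorem sum_tpow_rename_eq_zero' {m : ℕ} {H : ℕ → MvPolynomial σ k}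
    (h : (∑ d ∈ Finset.range m,
      (X none : MvPolynomial (Option σ) k) ^ (m - 1 - d) * rename Option.some (H d)) = 0) :
    ∀ d < m, H d = 0 := by
  intro d hd
  have key : (∑ i ∈ Finset.range m,
      (X none : MvPolynomial (Option σ) k) ^ i * rename Option.some (H (m - 1 - i))) = 0 := by
    rw [← h]
    rw [← Finset.sum_range_reflect
      (fun i => (X none : MvPolynomial (Option σ) k) ^ (m - 1 - i) * rename Option.some (H i)) m]
    refine Finset.sum_congr rfl fun i hi => ?_
    rw [Finset.mem_range] at hi
    rw [show m - 1 - (m - 1 - i) = i by omega]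
  have := sum_tpow_rename_eq_zero key (m - 1 - d) (by omega)
  rwa [show m - 1 - (m - 1 - d) = d by omega] at this

theorem combo_mem_ann (G : ℕ → MvPolynomial σ k) (n : ℕ) (rr' : ℕ → MvPolynomial σ k)
    (hlev : ∀ d < n, ∑ j ∈ Finset.range (d + 1), contract (rr' j) (G (d - j)) = 0) :
    contract (∑ j ∈ Finset.range n,
      (X none : MvPolynomial (Option σ) k) ^ j * rename Option.some (rr' j)) (Fm G n) = 0 := by
  classical
  rw [contract_combo_Fm]
  refine Finset.sum_eq_zero fun d hd => ?_
  rw [Finset.mem_range] at hd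
  have e : ∑ j ∈ Finset.range n, (if j ≤ d then contract (rr' j) (G (d - j)) else 0)
      = ∑ j ∈ Finset.range (d + 1), contract (rr' j) (G (d - j)) := by
    rw [← Finset.sum_subset (Finset.range_subset_range.mpr (by omega : d + 1 ≤ n))
      (fun j hj hnj => by
        rw [Finset.mem_range] at hj
        rw [Finset.mem_range, not_lt] at hnj
        rw [if_neg (by omega)])]
    exact Finset.sum_congr rfl fun j hj => by
      rw [Finset.mem_range] at hj
      rw [if_pos (by omega)]
  rw [e, hlev d hd, map_zero, mul_zero]

theorem cond_of_combo (G : ℕ → MvPolynomial σ k) (m M : ℕ) (rr : ℕ → MvPolynomial σ k)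
    (hM : m ≤ M)
    (h : contract (∑ j ∈ Finset.range M,
      (X none : MvPolynomial (Option σ) k) ^ j * rename Option.some (rr j)) (Fm G m) = 0) :
    ∀ d < m, ∑ j ∈ Finset.range (d + 1), contract (rr j) (G (d - j)) = 0 := by
  classical
  rw [contract_combo_Fm] at h
  intro d hd
  have h2 := sum_tpow_rename_eq_zero' h d hd
  rw [← Finset.sum_subset (Finset.range_subset_range.mpr (by omega : d + 1 ≤ M))
    (fun j hj hnj => by
      rw [Finset.mem_range] at hj
      rw [Finset.mem_range, not_lt] at hnj
      rw [if_neg (by omega)])] at h2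
  rw [← h2]
  exact Finset.sum_congr rfl fun j hj => by
    rw [Finset.mem_range] at hj
    rw [if_pos (by omega)]

theorem diff_mem_span (rr rr' : ℕ → MvPolynomial σ k) (m M n' : ℕ) (hM : m ≤ M) (hn' : m ≤ n')
    (hagree : ∀ j < m, rr' j = rr j) :
    (∑ j ∈ Finset.range M,
        (X none : MvPolynomial (Option σ) k) ^ j * rename Option.some (rr j))
      - (∑ j ∈ Finset.range n',
        (X none : MvPolynomial (Option σ) k) ^ j * rename Option.some (rr' j))
      ∈ Ideal.span {(X none : MvPolynomial (Option σ) k) ^ m} := by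
  classical
  have split : ∀ (K : ℕ), m ≤ K → ∀ (f : ℕ → MvPolynomial (Option σ) k),
      ∑ j ∈ Finset.range K, f j = (∑ j ∈ Finset.range m, f j) + ∑ j ∈ Finset.Ico m K, f j := by
    intro K hK f
    rw [Finset.range_eq_Ico, Finset.range_eq_Ico]
    exact (Finset.sum_Ico_consecutive f (Nat.zero_le m) hK).symm
  rw [split M hM _, split n' hn' _]
  have e : (∑ j ∈ Finset.range m,
        (X none : MvPolynomial (Option σ) k) ^ j * rename Option.some (rr' j))
      = ∑ j ∈ Finset.range m,
        (X none : MvPolynomial (Option σ) k) ^ j * rename Option.some (rr j) := by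
    refine Finset.sum_congr rfl fun j hj => ?_
    rw [Finset.mem_range] at hj
    rw [hagree j hj]
  rw [e]
  have memIco : ∀ (K : ℕ), (∑ j ∈ Finset.Ico m K,
      (X none : MvPolynomial (Option σ) k) ^ j * rename Option.some (rr j))
        ∈ Ideal.span {(X none : MvPolynomial (Option σ) k) ^ m} ∧
      (∑ j ∈ Finset.Ico m K,
      (X none : MvPolynomial (Option σ) k) ^ j * rename Option.some (rr' j))
        ∈ Ideal.span {(X none : MvPolynomial (Option σ) k) ^ m} := by
    intro K
    constructor <;>
    · refine Submodule.sum_mem _ fun j hj => ?_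
      rw [Finset.mem_Ico] at hj
      exact Ideal.mem_span_singleton.mpr
        (dvd_mul_of_dvd_left (pow_dvd_pow _ hj.1) _)
  have h1 := (memIco M).1
  have h2 := (memIco n').2
  have : (∑ j ∈ Finset.range m,
        (X none : MvPolynomial (Option σ) k) ^ j * rename Option.some (rr j))
      + (∑ j ∈ Finset.Ico m M,
        (X none : MvPolynomial (Option σ) k) ^ j * rename Option.some (rr j))
      - ((∑ j ∈ Finset.range m,
        (X none : MvPolynomial (Option σ) k) ^ j * rename Option.some (rr j))
      + ∑ j ∈ Finset.Ico m n',
        (X none : MvPolynomial (Option σ) k) ^ j * rename Option.some (rr' j))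
      = (∑ j ∈ Finset.Ico m M,
        (X none : MvPolynomial (Option σ) k) ^ j * rename Option.some (rr j))
        - ∑ j ∈ Finset.Ico m n',
        (X none : MvPolynomial (Option σ) k) ^ j * rename Option.some (rr' j) := by ring
  rw [this]
  exact Submodule.sub_mem _ h1 h2

end Helpers

section Cascade

theorem cascadeW {C B' : Type*} [CommRing C] [CommRing B'] (f : C →+* B') (T : C) (n : ℕ)
    (w : ℕ → C) (hfT : f T = 0)
    (hstar : ∀ j, 1 ≤ j → j < n → ∀ c : C, T ^ j * c = 0 → ∃ c', c = T ^ (n - j) * c')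
    (key : ∑ j ∈ Finset.range n, T ^ j * w j = 0)
    (hwz : ∀ j < n, f (w j) = 0 → w j = 0) :
    ∀ j < n, w j = 0 := by
  intro j
  induction j using Nat.strong_induction_on with
  | _ j ih =>
    intro hj
    have hu : T ^ j * (∑ i ∈ Finset.Ico j n, T ^ (i - j) * w i) = 0 := by
      rw [Finset.mul_sum]
      have e2 : ∀ i ∈ Finset.Ico j n, T ^ j * (T ^ (i - j) * w i) = T ^ i * w i := by
        intro i hi
        rw [Finset.mem_Ico] at hi
        rw [← mul_assoc, ← pow_add, show j + (i - j) = i by omega]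
      rw [Finset.sum_congr rfl e2]
      have e3 : ∑ i ∈ Finset.Ico 0 j, T ^ i * w i = 0 :=
        Finset.sum_eq_zero fun i hi => by
          rw [Finset.mem_Ico] at hi
          rw [ih i hi.2 (by omega), mul_zero]
      have e4 := Finset.sum_Ico_consecutive (fun i => T ^ i * w i)
        (Nat.zero_le j) (le_of_lt hj)
      rw [e3, zero_add] at e4
      rw [e4, ← Finset.range_eq_Ico, key]
    have hfu : f (∑ i ∈ Finset.Ico j n, T ^ (i - j) * w i) = 0 := by
      by_cases hj0 : j = 0
      · subst hj0
        rw [pow_zero, one_mul] at hu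
        rw [hu, map_zero]
      · obtain ⟨c', hc'⟩ := hstar j (by omega) hj _ hu
        rw [hc', map_mul, map_pow, hfT, zero_pow (by omega : n - j ≠ 0), zero_mul]
    have hsplit : ∑ i ∈ Finset.Ico j n, T ^ (i - j) * w i
        = w j + ∑ i ∈ Finset.Ico (j + 1) n, T ^ (i - j) * w i := by
      rw [Finset.sum_eq_sum_Ico_succ_bot hj, Nat.sub_self, pow_zero, one_mul]
    have hz : ∀ i ∈ Finset.Ico (j + 1) n, f (T ^ (i - j) * w i) = 0 := by
      intro i hi
      rw [Finset.mem_Ico] at hi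
      rw [map_mul, map_pow, hfT, zero_pow (by omega : i - j ≠ 0), zero_mul]
    have e5 : f (w j) = 0 := by
      have := hfu
      rw [hsplit, map_add, map_sum, Finset.sum_eq_zero hz, add_zero] at this
      exact this
    exact hwz j hj e5

end Cascade

set_option maxHeartbeats 1000000 in
set_option synthInstance.maxHeartbeats 1000000 in
/-- Theorem 3.2 (sufficiency).  `R = k[x_1,…,x_r]`, `S = R[t]` (`t` is the variable `X none`),
`Q` and `Q_S` their duals, `G 0 = F_B` nonzero homogeneous of degree `j_B`, `G i`
homogeneous of degree `j_B + i`, and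
`F = T^{n-1}G_0 + T^{n-2}G_1 + ⋯ + G_{n-1}`.  With `I_0 = Ann(G_0)`,
`I_i = (I_{i-1} : Ann(G_i))`, if `I_i ∘ G_{n-1-i} ⊆ R ∘ F_B` for all `i ≤ n-1`, then
`π : C → B` is surjective with `ker π = t·C` (coexactness) and `C = S/Ann(F)` is a free
extension of `A = k[t]/(t^n)` with fiber `B = R/Ann(F_B)`; in particular `C` is a free
`A`-module via `ι`. -/
theorem main_theorem_sufficiency (r n : ℕ) (hn : 1 ≤ n) (jB : ℕ)
    (G : ℕ → MvPolynomial (Fin r) k) (hG0 : G 0 ≠ 0)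
    (hGhom : ∀ i < n, (G i).IsHomogeneous (jB + i))
    (F : MvPolynomial (Option (Fin r)) k)
    (hF : F = ∑ i ∈ Finset.range n, X none ^ (n - 1 - i) * rename Option.some (G i))
    -- the ideals I_0 = Ann(G_0), I_i = (I_{i-1} : Ann(G_i))
    (I : ℕ → Ideal (MvPolynomial (Fin r) k))
    (hI0 : I 0 = annIdeal (G 0))
    (hIsucc : ∀ i, I (i + 1) = (I i).colon (annIdeal (G (i + 1))))
    -- the hypothesis: I_i ∘ G_{n-1-i} ⊆ R ∘ F_B for i = 0, …, n-1
    (hmain : ∀ i < n, ∀ g ∈ I i, ∃ h : MvPolynomial (Fin r) k,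
      contract g (G (n - 1 - i)) = contract h (G 0))
    -- the algebra maps ι : A → C (induced by t ↦ t) and π : C → B (induced by x_i ↦ x_i, t ↦ 0)
    (ι : (Polynomial k ⧸ Ideal.span {(Polynomial.X : Polynomial k) ^ n}) →ₐ[k]
      (MvPolynomial (Option (Fin r)) k ⧸ annIdeal F))
    (hι : ι (Ideal.Quotient.mk _ Polynomial.X) = Ideal.Quotient.mk _ (X none))
    (π : (MvPolynomial (Option (Fin r)) k ⧸ annIdeal F) →ₐ[k]
      (MvPolynomial (Fin r) k ⧸ annIdeal (G 0)))
    (hπ : ∀ s : MvPolynomial (Option (Fin r)) k,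
      π (Ideal.Quotient.mk _ s)
        = Ideal.Quotient.mk _ (aeval (fun o => o.elim 0 fun i => X i) s)) :
    -- coexactness: π is surjective with kernel t·C …
    Function.Surjective π ∧
    RingHom.ker π = Ideal.span {Ideal.Quotient.mk (annIdeal F) (X none)} ∧
    -- … and C is a free A-module via ι
    freeVia ι.toRingHom := by
  classical
  have hFm : F = Fm G n := hF
  -- evaluation facts
  have hev_rename : ∀ q : MvPolynomial (Fin r) k,
      aeval (fun o : Option (Fin r) => o.elim (0 : MvPolynomial (Fin r) k) fun i => X i) (rename Option.some q) = q := by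
    intro q
    rw [aeval_rename]
    rw [show ((fun o : Option (Fin r) => o.elim (0 : MvPolynomial (Fin r) k) fun i => X i)
      ∘ Option.some) = (X : Fin r → MvPolynomial (Fin r) k) from rfl]
    exact aeval_X_left_apply q
  have hev_t : aeval (fun o : Option (Fin r) => o.elim (0 : MvPolynomial (Fin r) k) fun i => X i)
      (X (none : Option (Fin r)) : MvPolynomial (Option (Fin r)) k) = 0 := by
    rw [aeval_X]
    rfl
  -- surjectivity
  have hsurj : Function.Surjective π := by
    intro b
    obtain ⟨g, rfl⟩ := Ideal.Quotient.mk_surjective b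
    exact ⟨Ideal.Quotient.mk _ (rename Option.some g), by rw [hπ, hev_rename]⟩
  -- π kills T
  have hπT : π (Ideal.Quotient.mk (annIdeal F) (X none)) = 0 := by
    rw [hπ, hev_t, map_zero]
  -- evaluation of a decomposition
  have hev_decomp : ∀ (M : ℕ) (rr : ℕ → MvPolynomial (Fin r) k), 1 ≤ M →
      aeval (fun o : Option (Fin r) => o.elim (0 : MvPolynomial (Fin r) k) fun i => X i)
        (∑ j ∈ Finset.range M,
          (X none : MvPolynomial (Option (Fin r)) k) ^ j * rename Option.some (rr j))
        = rr 0 := by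
    intro M rr hM
    rw [map_sum]
    rw [Finset.sum_eq_single_of_mem 0 (Finset.mem_range.mpr (by omega))
      (fun j _ hj => by
        rw [map_mul, map_pow, hev_t, zero_pow hj, zero_mul])]
    rw [map_mul, map_pow, hev_t, pow_zero, one_mul, hev_rename]
  -- membership in ann F from levels
  have hannF : ∀ rr' : ℕ → MvPolynomial (Fin r) k,
      (∀ d < n, ∑ j ∈ Finset.range (d + 1), contract (rr' j) (G (d - j)) = 0) →
      (∑ j ∈ Finset.range n,
        (X none : MvPolynomial (Option (Fin r)) k) ^ j * rename Option.some (rr' j))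
        ∈ annIdeal F := by
    intro rr' hlev
    rw [mem_annIdeal_iff, hFm]
    exact combo_mem_ann G n rr' hlev
  -- kernel computation
  have hker : RingHom.ker π = Ideal.span {Ideal.Quotient.mk (annIdeal F) (X none)} := by
    apply le_antisymm
    · intro c hc
      rw [RingHom.mem_ker] at hc
      obtain ⟨s, rfl⟩ := Ideal.Quotient.mk_surjective c
      rw [hπ] at hc
      have hev0 : contract (aeval (fun o : Option (Fin r) =>
          o.elim (0 : MvPolynomial (Fin r) k) fun i => X i) s) (G 0) = 0 :=
        mem_annIdeal_iff.mp (Ideal.Quotient.eq_zero_iff_mem.mp hc)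
      obtain ⟨N, rr, hdec⟩ := exists_decomp s
      set M := max N n with hM
      have hsM : s = ∑ j ∈ Finset.range M,
          (X none : MvPolynomial (Option (Fin r)) k) ^ j * rename Option.some (rr j) :=
        hdec M (le_max_left _ _)
      have hr0 : contract (rr 0) (G 0) = 0 := by
        rw [hsM, hev_decomp M rr (by omega)] at hev0
        exact hev0
      obtain ⟨rr', hagree, hlev⟩ := extend_exists G I hI0 hIsucc n hmain 1 rr
        (fun d hd => by
          have hd0 : d = 0 := by omega
          subst hd0
          rw [Finset.sum_range_one, Nat.sub_zero]
          exact hr0)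
      have hmem := hannF rr' hlev
      have hdiff := diff_mem_span rr rr' 1 M n (by omega) (by omega) hagree
      rw [pow_one] at hdiff
      have : Ideal.Quotient.mk (annIdeal F) s
          = Ideal.Quotient.mk (annIdeal F) (s - ∑ j ∈ Finset.range n,
            (X none : MvPolynomial (Option (Fin r)) k) ^ j * rename Option.some (rr' j)) := by
        rw [map_sub, Ideal.Quotient.eq_zero_iff_mem.mpr hmem, sub_zero]
      rw [this, hsM]
      have himg := Ideal.mem_map_of_mem (Ideal.Quotient.mk (annIdeal F)) hdiff
      rwa [Ideal.map_span, Set.image_singleton] at himg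
    · rw [Ideal.span_le]
      intro x hx
      rw [Set.mem_singleton_iff] at hx
      subst hx
      rw [SetLike.mem_coe, RingHom.mem_ker]
      exact hπT
  -- T^n = 0 in C
  have hTn : (Ideal.Quotient.mk (annIdeal F) (X none)) ^ n = 0 := by
    rw [← map_pow, Ideal.Quotient.eq_zero_iff_mem, mem_annIdeal_iff, hFm,
      contract_tpow_Fm, Nat.sub_self, Fm, Finset.range_zero, Finset.sum_empty]
  -- the "star" divisibility lemma in C
  have hstar : ∀ j, 1 ≤ j → j < n →
      ∀ c : MvPolynomial (Option (Fin r)) k ⧸ annIdeal F,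
        (Ideal.Quotient.mk (annIdeal F) (X none)) ^ j * c = 0 →
        ∃ c', c = (Ideal.Quotient.mk (annIdeal F) (X none)) ^ (n - j) * c' := by
    intro j hj1 hjn c hc
    obtain ⟨s, rfl⟩ := Ideal.Quotient.mk_surjective c
    have hmem : (X none : MvPolynomial (Option (Fin r)) k) ^ j * s ∈ annIdeal F := by
      rw [← Ideal.Quotient.eq_zero_iff_mem, map_mul, map_pow]
      exact hc
    have hcontr : contract s (Fm G (n - j)) = 0 := by
      have h1 : contract ((X none : MvPolynomial (Option (Fin r)) k) ^ j * s) F = 0 :=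
        mem_annIdeal_iff.mp hmem
      rw [mul_comm, contract_mul, hFm, contract_tpow_Fm] at h1
      exact h1
    obtain ⟨N, rr, hdec⟩ := exists_decomp s
    set M := max N n with hMdef
    have hsM : s = ∑ j' ∈ Finset.range M,
        (X none : MvPolynomial (Option (Fin r)) k) ^ j' * rename Option.some (rr j') :=
      hdec M (le_max_left _ _)
    have hcond : ∀ d < n - j,
        ∑ j' ∈ Finset.range (d + 1), contract (rr j') (G (d - j')) = 0 := by
      apply cond_of_combo G (n - j) M rr (by omega)
      rw [← hsM]
      exact hcontr
    obtain ⟨rr', hagree, hlev⟩ := extend_exists G I hI0 hIsucc n hmain (n - j) rr hcond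
    have hmem' := hannF rr' hlev
    have hdiff := diff_mem_span rr rr' (n - j) M n (by omega) (by omega) hagree
    have : Ideal.Quotient.mk (annIdeal F) s
        = Ideal.Quotient.mk (annIdeal F) (s - ∑ j' ∈ Finset.range n,
          (X none : MvPolynomial (Option (Fin r)) k) ^ j' * rename Option.some (rr' j')) := by
      rw [map_sub, Ideal.Quotient.eq_zero_iff_mem.mpr hmem', sub_zero]
    rw [this, hsM]
    have himg := Ideal.mem_map_of_mem (Ideal.Quotient.mk (annIdeal F)) hdiff
    rw [Ideal.map_span, Set.image_singleton] at himg
    obtain ⟨c', hc'⟩ := Ideal.mem_span_singleton.mp himg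
    rw [← hsM] at hc' ⊢
    exact ⟨c', by rw [hc', map_pow]⟩
  refine ⟨hsurj, hker, ?_⟩
  -- freeness
  show freeVia ι.toRingHom
  letI instM : Module (Polynomial k ⧸ Ideal.span {(Polynomial.X : Polynomial k) ^ n})
      (MvPolynomial (Option (Fin r)) k ⧸ annIdeal F) := Module.compHom _ ι.toRingHom
  have hsmul : ∀ (a : Polynomial k ⧸ Ideal.span {(Polynomial.X : Polynomial k) ^ n})
      (c : MvPolynomial (Option (Fin r)) k ⧸ annIdeal F), a • c = ι a * c := fun _ _ => rfl
  have hsmul2 : ∀ (x : k) (a : Polynomial k ⧸ Ideal.span {(Polynomial.X : Polynomial k) ^ n})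
      (c : MvPolynomial (Option (Fin r)) k ⧸ annIdeal F), (x • a) • c = x • (a • c) := by
    intro x a c
    rw [hsmul, hsmul, map_smul, smul_mul_assoc]
  have hTsmul : ∀ (j : ℕ) (c : MvPolynomial (Option (Fin r)) k ⧸ annIdeal F),
      ((Ideal.Quotient.mk (Ideal.span {(Polynomial.X : Polynomial k) ^ n}) Polynomial.X) ^ j)
        • c = (Ideal.Quotient.mk (annIdeal F) (X none)) ^ j * c := by
    intro j c
    rw [hsmul, map_pow, hι]
  -- representation of elements of A
  have hrep : ∀ a : Polynomial k ⧸ Ideal.span {(Polynomial.X : Polynomial k) ^ n},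
      ∃ lam : ℕ → k, a = ∑ j ∈ Finset.range n, lam j •
        (Ideal.Quotient.mk (Ideal.span {(Polynomial.X : Polynomial k) ^ n}) Polynomial.X) ^ j := by
    intro a
    obtain ⟨p, rfl⟩ := Ideal.Quotient.mk_surjective a
    refine ⟨fun j => p.coeff j, ?_⟩
    have hdvd : (Polynomial.X : Polynomial k) ^ n ∣
        p - ∑ j ∈ Finset.range n, Polynomial.C (p.coeff j) * Polynomial.X ^ j := by
      rw [Polynomial.X_pow_dvd_iff]
      intro d hd
      rw [Polynomial.coeff_sub, Polynomial.finset_sum_coeff]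
      have : ∀ j ∈ Finset.range n,
          (Polynomial.C (p.coeff j) * Polynomial.X ^ j).coeff d
            = if j = d then p.coeff j else 0 := fun j _ => by
        rw [Polynomial.C_mul_X_pow_eq_monomial, Polynomial.coeff_monomial]
      rw [Finset.sum_congr rfl this, Finset.sum_ite_eq' (Finset.range n) d (fun j => p.coeff j),
        if_pos (Finset.mem_range.mpr hd), sub_self]
    have heq : Ideal.Quotient.mk (Ideal.span {(Polynomial.X : Polynomial k) ^ n}) p
        = Ideal.Quotient.mk _ (∑ j ∈ Finset.range n, Polynomial.C (p.coeff j)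
          * Polynomial.X ^ j) :=
      Ideal.Quotient.eq.mpr (Ideal.mem_span_singleton.mpr hdvd)
    rw [heq, map_sum]
    refine Finset.sum_congr rfl fun j _ => ?_
    rw [← Polynomial.smul_eq_C_mul, ← Ideal.Quotient.mkₐ_eq_mk k, map_smul, map_pow]
  -- the k-basis of B, and lifts
  set bB := Module.Basis.ofVectorSpace k (MvPolynomial (Fin r) k ⧸ annIdeal (G 0)) with hbB
  have hlift : ∀ α, ∃ c, π c = bB α := fun α => hsurj (bB α)
  set cα := fun α => (hlift α).choose with hcα'
  have hcα : ∀ α, π (cα α) = bB α := fun α => (hlift α).choose_spec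
  -- spanning
  have hreach : ∀ (j : ℕ) (c : MvPolynomial (Option (Fin r)) k ⧸ annIdeal F),
      ∃ v ∈ Submodule.span (Polynomial k ⧸ Ideal.span {(Polynomial.X : Polynomial k) ^ n})
        (Set.range cα), ∃ u, c = v + (Ideal.Quotient.mk (annIdeal F) (X none)) ^ j * u := by
    intro j
    induction j with
    | zero =>
      intro c
      exact ⟨0, Submodule.zero_mem _, c, by rw [pow_zero, one_mul, zero_add]⟩
    | succ j ih =>
      intro c
      obtain ⟨v, hv, u, hc⟩ := ih c
      have h1 := bB.linearCombination_repr (π u)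
      rw [Finsupp.linearCombination_apply, Finsupp.sum] at h1
      set w := ∑ α ∈ (bB.repr (π u)).support, (bB.repr (π u)) α • cα α with hw
      have hπw : π w = π u := by
        rw [hw, map_sum]
        rw [show (∑ α ∈ (bB.repr (π u)).support, π ((bB.repr (π u)) α • cα α))
            = ∑ α ∈ (bB.repr (π u)).support, (bB.repr (π u)) α • bB α from
          Finset.sum_congr rfl fun α _ => by rw [map_smul, hcα]]
        exact h1
      have hker' : u - w ∈ RingHom.ker π := by
        rw [RingHom.mem_ker, map_sub, hπw, sub_self]
      rw [hker] at hker'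
      obtain ⟨u', hu'⟩ := Ideal.mem_span_singleton.mp hker'
      refine ⟨v + (Ideal.Quotient.mk (annIdeal F) (X none)) ^ j * w, ?_, u', ?_⟩
      · refine Submodule.add_mem _ hv ?_
        rw [hw, Finset.mul_sum]
        refine Submodule.sum_mem _ fun α _ => ?_
        rw [mul_smul_comm, ← hTsmul, ← hsmul2]
        exact Submodule.smul_mem _ _ (Submodule.subset_span ⟨α, rfl⟩)
      · have hu'' : u = w + (Ideal.Quotient.mk (annIdeal F) (X none)) * u' := by
          rw [← hu']; ring
        rw [hc, hu'']
        ring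
  have hspan : ⊤ ≤ Submodule.span (Polynomial k ⧸ Ideal.span {(Polynomial.X : Polynomial k) ^ n})
      (Set.range cα) := by
    intro c _
    obtain ⟨v, hv, u, hc⟩ := hreach n c
    rw [hTn, zero_mul, add_zero] at hc
    rwa [hc]
  -- linear independence
  have hli : LinearIndependent (Polynomial k ⧸ Ideal.span {(Polynomial.X : Polynomial k) ^ n})
      cα := by
    rw [linearIndependent_iff']
    intro s g hsum α hα
    set lam : ℕ → _ → k := fun j β => (hrep (g β)).choose j with hlam
    have hg : ∀ β, g β = ∑ j ∈ Finset.range n, lam j β •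
        (Ideal.Quotient.mk (Ideal.span {(Polynomial.X : Polynomial k) ^ n}) Polynomial.X) ^ j :=
      fun β => (hrep (g β)).choose_spec
    set w := fun j => ∑ β ∈ s, lam j β • cα β with hwdef
    have key : ∑ j ∈ Finset.range n,
        (Ideal.Quotient.mk (annIdeal F) (X none)) ^ j * w j = 0 := by
      rw [← hsum]
      have e1 : ∀ j ∈ Finset.range n, (Ideal.Quotient.mk (annIdeal F) (X none)) ^ j * w j
          = ∑ β ∈ s, lam j β • ((Ideal.Quotient.mk (annIdeal F) (X none)) ^ j * cα β) := by
        intro j _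
        rw [hwdef, Finset.mul_sum]
        exact Finset.sum_congr rfl fun β _ => by rw [mul_smul_comm]
      rw [Finset.sum_congr rfl e1, Finset.sum_comm]
      refine Finset.sum_congr rfl fun β _ => ?_
      rw [hg β, Finset.sum_smul]
      refine Finset.sum_congr rfl fun j _ => ?_
      rw [hsmul2, hTsmul]
    have hwz : ∀ j, j < n → π (w j) = 0 → (∀ β ∈ s, lam j β = 0) ∧ w j = 0 := by
      intro j _ hπwj
      have h0 : ∑ β ∈ s, lam j β • bB β = 0 := by
        rw [← hπwj, hwdef, map_sum]
        exact Finset.sum_congr rfl fun β _ => by rw [map_smul, hcα]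
      have hlam0 : ∀ β ∈ s, lam j β = 0 :=
        linearIndependent_iff'.mp bB.linearIndependent s (fun β => lam j β) h0
      exact ⟨hlam0, Finset.sum_eq_zero fun β hβ => by rw [hlam0 β hβ, zero_smul]⟩
    have hwall : ∀ j, j < n → w j = 0 :=
      cascadeW π.toRingHom (Ideal.Quotient.mk (annIdeal F) (X none)) n w hπT hstar key
        (fun j hj hp => (hwz j hj hp).2)
    have hlamall : ∀ j < n, ∀ β ∈ s, lam j β = 0 := by
      intro j hj
      exact (hwz j hj (by rw [hwall j hj, map_zero])).1
    rw [hg α]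
    exact Finset.sum_eq_zero fun j hj => by
      rw [hlamall j (Finset.mem_range.mp hj) α hα, zero_smul]
  exact Module.Free.of_basis (Module.Basis.mk hli hspan)

end
end

section
/- Let A, C, B be Poincaré duality algebras of socle degrees j_A, j_C, j_B respectively, with j_C = j_A + j_B, and let ι : A → C and π : C → B be graded k-algebra homomorphisms such that π is surjective and ker π equals the ideal of C generated by ι(A_+). Then C is a free A-module via ι. -/
noncomputable section

variable {k : Type*} [Field k]

/-- A graded algebra `A` with grading `𝒜` is a Poincaré duality algebra of socle degree
`j` if `A_j` is one-dimensional, `A_i = 0` for `i > j`, and for each `0 ≤ i ≤ j` the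
multiplication pairing `A_i × A_{j-i} → A_j ≅ k` is nondegenerate. -/
def IsPoincareDuality {A : Type*} [CommRing A] [Algebra k A]
    (𝒜 : ℕ → Submodule k A) (j : ℕ) : Prop :=
  Module.finrank k (𝒜 j) = 1 ∧ (∀ i, j < i → 𝒜 i = ⊥) ∧
    (∀ i ≤ j, ∀ a ∈ 𝒜 i, a ≠ 0 → ∃ b ∈ 𝒜 (j - i), a * b ≠ 0)

lemma aux_onedim {K V : Type*} [Field K] [AddCommGroup V] [Module K V]
    (h : Module.finrank K V = 1) {t : V} (ht : t ≠ 0) (w : V) : ∃ μ : K, w = μ • t := by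
  obtain ⟨v, hv, hall⟩ := finrank_eq_one_iff'.mp h
  obtain ⟨c0, hc0⟩ := hall t
  obtain ⟨c1, hc1⟩ := hall w
  have hc0' : c0 ≠ 0 := by rintro rfl; rw [zero_smul] at hc0; exact ht hc0.symm
  exact ⟨c1 / c0, by rw [← hc1, ← hc0, smul_smul, div_mul_cancel₀ _ hc0']⟩

lemma aux_nonzero {K V : Type*} [Field K] [AddCommGroup V] [Module K V]
    (h : Module.finrank K V = 1) : ∃ v : V, v ≠ 0 := by
  obtain ⟨v, hv, -⟩ := finrank_eq_one_iff'.mp h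
  exact ⟨v, hv⟩

/-- Lemma 3.3 ([MeSm, Lemma VI.4.11]).  Let `k → A → C → B → k` be a coexact sequence of
Poincaré duality algebras (i.e. `π` is surjective and `ker π` is the ideal of `C`
generated by `ι(A_+)`) whose socle degrees satisfy `j_C = j_A + j_B`.  Then `C` is a
free `A`-module via `ι`. -/
theorem lemma_SS {A C B : Type*} [CommRing A] [CommRing C] [CommRing B]
    [Algebra k A] [Algebra k C] [Algebra k B]
    (𝒜 : ℕ → Submodule k A) (𝒞 : ℕ → Submodule k C) (ℬ : ℕ → Submodule k B)
    [GradedAlgebra 𝒜] [GradedAlgebra 𝒞] [GradedAlgebra ℬ]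
    [FiniteDimensional k A] [FiniteDimensional k C] [FiniteDimensional k B]
    (hA0 : 𝒜 0 = 1) (hC0 : 𝒞 0 = 1) (hB0 : ℬ 0 = 1)
    (jA jC jB : ℕ)
    (hPDA : IsPoincareDuality 𝒜 jA) (hPDC : IsPoincareDuality 𝒞 jC)
    (hPDB : IsPoincareDuality ℬ jB)
    (hsocle : jC = jA + jB)
    -- graded algebra homomorphisms ι : A → C and π : C → B
    (ι : A →ₐ[k] C) (hιgr : ∀ i, (𝒜 i).map ι.toLinearMap ≤ 𝒞 i)
    (π : C →ₐ[k] B) (hπgr : ∀ i, (𝒞 i).map π.toLinearMap ≤ ℬ i)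
    -- coexactness: π is surjective and ker π = (ι(A_+))·C
    (hsurj : Function.Surjective π)
    (hker : RingHom.ker π = Ideal.span (⇑ι '' {a | ∃ i, 0 < i ∧ a ∈ 𝒜 i})) :
    freeVia ι.toRingHom := by
  classical
  obtain ⟨hA1, hAtop, hApair⟩ := hPDA
  obtain ⟨hC1, hCtop, hCpair⟩ := hPDC
  obtain ⟨hB1, hBtop, hBpair⟩ := hPDB
  letI : Module A C := Module.compHom C ι.toRingHom
  have hsmul : ∀ (a : A) (x : C), a • x = ι a * x := fun _ _ => rfl
  have hks : ∀ (μ : k) (x : C), (algebraMap k A μ) • x = μ • x := by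
    intro μ x
    rw [hsmul, AlgHom.commutes, ← Algebra.smul_def]
  -- ι is compatible with decompositions
  have hιmem : ∀ {m : ℕ} {a : A}, a ∈ 𝒜 m → ι a ∈ 𝒞 m := by
    intro m a ha; exact hιgr m ⟨a, ha, rfl⟩
  have hπmem : ∀ {m : ℕ} {x : C}, x ∈ 𝒞 m → π x ∈ ℬ m := by
    intro m x hx; exact hπgr m ⟨x, hx, rfl⟩
  have hdec : ∀ (a : A) (n : ℕ),
      (DirectSum.decompose 𝒞 (ι a) n : C) = ι (DirectSum.decompose 𝒜 a n : A) := by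
    intro a n
    induction a using DirectSum.Decomposition.inductionOn 𝒜 with
    | zero => simp
    | @homogeneous i m =>
      by_cases h : i = n
      · subst h
        rw [DirectSum.decompose_of_mem_same 𝒞 (hιmem m.2),
          DirectSum.decompose_of_mem_same 𝒜 m.2]
      · rw [DirectSum.decompose_of_mem_ne 𝒞 (hιmem m.2) h,
          DirectSum.decompose_of_mem_ne 𝒜 m.2 h, map_zero]
    | add x y hx hy =>
      rw [map_add, DirectSum.decompose_add, DirectSum.add_apply, Submodule.coe_add, hx, hy,
        DirectSum.decompose_add, DirectSum.add_apply, Submodule.coe_add, map_add]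
  have hdecπ : ∀ (x : C) (n : ℕ),
      (DirectSum.decompose ℬ (π x) n : B) = π (DirectSum.decompose 𝒞 x n : C) := by
    intro x n
    induction x using DirectSum.Decomposition.inductionOn 𝒞 with
    | zero => simp
    | @homogeneous i m =>
      by_cases h : i = n
      · subst h
        rw [DirectSum.decompose_of_mem_same ℬ (hπmem m.2),
          DirectSum.decompose_of_mem_same 𝒞 m.2]
      · rw [DirectSum.decompose_of_mem_ne ℬ (hπmem m.2) h,
          DirectSum.decompose_of_mem_ne 𝒞 m.2 h, map_zero]
    | add x y hx hy =>
      rw [map_add, DirectSum.decompose_add, DirectSum.add_apply, Submodule.coe_add, hx, hy,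
        DirectSum.decompose_add, DirectSum.add_apply, Submodule.coe_add, map_add]
  -- degreewise surjectivity of π
  have hπsurj : ∀ n, ∀ y ∈ ℬ n, ∃ x ∈ 𝒞 n, π x = y := by
    intro n y hy
    obtain ⟨x, hx⟩ := hsurj y
    refine ⟨(DirectSum.decompose 𝒞 x n : C), (DirectSum.decompose 𝒞 x n).2, ?_⟩
    rw [← hdecπ, hx, DirectSum.decompose_of_mem_same ℬ hy]
  -- homogeneous components of elements of ker π
  set S1 : ℕ → Set C := fun n =>
    {w | ∃ m, 0 < m ∧ m ≤ n ∧ ∃ a ∈ 𝒜 m, ∃ y ∈ 𝒞 (n - m), w = ι a * y} with hS1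
  have hkercomp : ∀ z : C, π z = 0 → ∀ n,
      (DirectSum.decompose 𝒞 z n : C) ∈ Submodule.span k (S1 n) := by
    intro z hz n
    have hzmem : z ∈ Ideal.span (⇑ι '' {a | ∃ i, 0 < i ∧ a ∈ 𝒜 i}) := by
      rw [← hker]; exact RingHom.mem_ker.mpr hz
    rw [Ideal.span, Submodule.mem_span_set'] at hzmem
    obtain ⟨NN, f, g, hrep⟩ := hzmem
    have hg : ∀ i : Fin NN, ∃ a : A, (∃ m, 0 < m ∧ a ∈ 𝒜 m) ∧ ι a = (g i : C) := by
      intro i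
      obtain ⟨a, ha, hae⟩ := (g i).2
      exact ⟨a, ha, hae⟩
    choose aa haa hga using hg
    choose mm hmm0 hmmmem using haa
    have hzdec : (DirectSum.decompose 𝒞 z n : C)
        = ∑ i : Fin NN, (DirectSum.decompose 𝒞 (f i * ι (aa i)) n : C) := by
      have h1 : z = ∑ i : Fin NN, f i * ι (aa i) := by
        rw [← hrep]
        exact Finset.sum_congr rfl fun i _ => by rw [smul_eq_mul, hga]
      rw [h1, DirectSum.decompose_sum, DFinsupp.finset_sum_apply, Submodule.coe_sum]
    rw [hzdec]
    refine Submodule.sum_mem _ fun i _ => ?_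
    by_cases hle : mm i ≤ n
    · rw [DirectSum.coe_decompose_mul_of_right_mem_of_le 𝒞 (hιmem (hmmmem i)) hle]
      exact Submodule.subset_span ⟨mm i, hmm0 i, hle, aa i, hmmmem i,
        (DirectSum.decompose 𝒞 (f i) (n - mm i) : C),
        (DirectSum.decompose 𝒞 (f i) (n - mm i)).2, (mul_comm _ _)⟩
    · rw [DirectSum.coe_decompose_mul_of_right_mem_of_not_le 𝒞 (hιmem (hmmmem i)) hle]
      exact Submodule.zero_mem _
  -- killing lemma: socle of A kills ker π
  have hkill : ∀ t ∈ 𝒜 jA, ∀ z : C, π z = 0 → ι t * z = 0 := by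
    intro t ht z hz
    have hzmem : z ∈ Ideal.span (⇑ι '' {a | ∃ i, 0 < i ∧ a ∈ 𝒜 i}) := by
      rw [← hker]; exact RingHom.mem_ker.mpr hz
    refine Submodule.span_induction (p := fun z _ => ι t * z = 0) ?_ ?_ ?_ ?_ hzmem
    · rintro x ⟨a, ⟨i, hi, hai⟩, rfl⟩
      show ι t * ι a = 0
      rw [← map_mul]
      have h1 : t * a ∈ 𝒜 (jA + i) := SetLike.mul_mem_graded ht hai
      rw [hAtop _ (by omega)] at h1
      rw [(Submodule.mem_bot k).mp h1, map_zero]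
    · show ι t * 0 = 0
      rw [mul_zero]
    · intro x y _ _ hx hy
      show ι t * (x + y) = 0
      rw [mul_add, hx, hy, add_zero]
    · intro r x _ hx
      show ι t * (r • x) = 0
      rw [smul_eq_mul, mul_left_comm, hx, mul_zero]
  -- L4 : the socle pairs nontrivially with some element of 𝒞 jB
  have hL4 : ∀ t ∈ 𝒜 jA, t ≠ 0 → ∃ w ∈ 𝒞 jB, ι t * w ≠ 0 := by
    intro t ht htne
    obtain ⟨z₀s, hz₀ne⟩ := aux_nonzero (V := 𝒞 jC) hC1
    have hz₀mem : (z₀s : C) ∈ 𝒞 jC := z₀s.2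
    set z₀ : C := (z₀s : C) with hz₀
    have hz₀ne' : z₀ ≠ 0 := fun h => hz₀ne (Subtype.ext h)
    by_cases hjA : jA = 0
    · subst hjA
      rw [hA0] at ht
      obtain ⟨ν, hν⟩ := Submodule.mem_one.mp ht
      have hν0 : ν ≠ 0 := by
        rintro rfl
        exact htne (by rw [← hν, map_zero])
      refine ⟨z₀, by rwa [show jB = jC by omega], ?_⟩
      rw [← hν, AlgHom.commutes, ← Algebra.smul_def]
      exact smul_ne_zero hν0 hz₀ne'
    · have hjA' : 0 < jA := Nat.pos_of_ne_zero hjA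
      set T : ℕ → Submodule k C := fun m =>
        Submodule.span k {w | ∃ r, m ≤ r ∧ ∃ a ∈ 𝒜 r, ∃ y ∈ 𝒞 (jC - r), w = ι a * y} with hT
      have hπz₀ : π z₀ = 0 := by
        have h1 := hπmem hz₀mem
        rw [hBtop jC (by omega)] at h1
        exact (Submodule.mem_bot k).mp h1
      have hbase : z₀ ∈ T 1 := by
        have h1 := hkercomp z₀ hπz₀ jC
        rw [DirectSum.decompose_of_mem_same 𝒞 hz₀mem] at h1
        refine Submodule.span_mono ?_ h1
        rintro w ⟨m, hm0, hmle, a, ha, y, hy, rfl⟩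
        exact ⟨m, hm0, a, ha, y, hy, rfl⟩
      have hstep : ∀ m, 0 < m → m < jA → T m ≤ T (m + 1) := by
        intro m hm0 hmjA
        refine Submodule.span_le.mpr ?_
        rintro w ⟨r, hr, a, ha, y, hy, rfl⟩
        by_cases hr' : m + 1 ≤ r
        · exact Submodule.subset_span ⟨r, hr', a, ha, y, hy, rfl⟩
        · have hrm : r = m := by omega
          subst hrm
          have hπy : π y = 0 := by
            have h1 := hπmem hy
            rw [hBtop (jC - r) (by omega)] at h1
            exact (Submodule.mem_bot k).mp h1
          have h2 := hkercomp y hπy (jC - r)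
          rw [DirectSum.decompose_of_mem_same 𝒞 hy] at h2
          refine Submodule.span_induction (p := fun y _ => ι a * y ∈ T (r + 1)) ?_ ?_ ?_ ?_ h2
          · rintro w' ⟨m', hm'0, hm'le, a', ha', y', hy', rfl⟩
            have heq : ι a * (ι a' * y') = ι (a * a') * y' := by rw [map_mul, mul_assoc]
            rw [heq]
            rw [Nat.sub_sub] at hy'
            exact Submodule.subset_span
              ⟨r + m', by omega, a * a', SetLike.mul_mem_graded ha ha', y', hy', rfl⟩
          · show ι a * 0 ∈ T (r + 1)
            rw [mul_zero]; exact Submodule.zero_mem _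
          · intro u v _ _ hu hv
            show ι a * (u + v) ∈ T (r + 1)
            rw [mul_add]; exact Submodule.add_mem _ hu hv
          · intro ν u _ hu
            show ι a * (ν • u) ∈ T (r + 1)
            rw [mul_smul_comm]; exact Submodule.smul_mem _ _ hu
      have hchain : ∀ m, 1 ≤ m → m ≤ jA → z₀ ∈ T m := by
        intro m
        induction m with
        | zero => omega
        | succ p ih =>
          intro h1 h2
          by_cases hp : p = 0
          · subst hp; exact hbase
          · exact hstep p (by omega) (by omega) (ih (by omega) (by omega))
      have hfin : z₀ ∈ T jA := hchain jA hjA' le_rfl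
      have himg : T jA ≤ Submodule.map (LinearMap.mulLeft k (ι t)) (𝒞 jB) := by
        refine Submodule.span_le.mpr ?_
        rintro w ⟨r, hr, a, ha, y, hy, rfl⟩
        rcases Nat.lt_or_ge jA r with h | h
        · have ha0 : a = 0 := by
            rw [hAtop r h] at ha
            exact (Submodule.mem_bot k).mp ha
          rw [ha0, map_zero, zero_mul]
          exact Submodule.zero_mem _
        · have hr' : r = jA := le_antisymm h hr
          subst hr'
          obtain ⟨ν, hν⟩ := aux_onedim (V := 𝒜 r) hA1 (t := ⟨t, ht⟩)
            (fun h0 => htne (congrArg Subtype.val h0)) ⟨a, ha⟩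
          have hν' : a = ν • t := congrArg Subtype.val hν
          have hy' : y ∈ 𝒞 jB := by rwa [show jC - r = jB by omega] at hy
          refine ⟨ν • y, Submodule.smul_mem _ _ hy', ?_⟩
          rw [LinearMap.mulLeft_apply, hν', map_smul, smul_mul_assoc, mul_smul_comm]
      obtain ⟨y', hy', hz⟩ := himg hfin
      rw [LinearMap.mulLeft_apply] at hz
      exact ⟨y', hy', by rw [hz]; exact hz₀ne'⟩
  -- L3 : multiplication by the socle is injective on π-nonzero homogeneous elements
  have hL3 : ∀ (n : ℕ) (u : C), u ∈ 𝒞 n → π u ≠ 0 →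
      ∀ t ∈ 𝒜 jA, t ≠ 0 → ι t * u ≠ 0 := by
    intro n u hu hπu t ht htne
    have hn : n ≤ jB := by
      by_contra h
      push_neg at h
      have h1 := hπmem hu
      rw [hBtop n h] at h1
      exact hπu ((Submodule.mem_bot k).mp h1)
    obtain ⟨b', hb', hpair⟩ := hBpair n hn (π u) (hπmem hu) hπu
    obtain ⟨v, hv, hπv⟩ := hπsurj (jB - n) b' hb'
    have hwmem : u * v ∈ 𝒞 jB := by
      have h1 := SetLike.mul_mem_graded hu hv
      rwa [show n + (jB - n) = jB by omega] at h1
    have hπw : π (u * v) ≠ 0 := by rw [map_mul, hπv]; exact hpair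
    obtain ⟨w', hw', hw'ne⟩ := hL4 t ht htne
    obtain ⟨ν, hν⟩ := aux_onedim (V := ℬ jB) hB1 (t := ⟨π (u * v), hπmem hwmem⟩)
      (fun h0 => hπw (congrArg Subtype.val h0)) ⟨π w', hπmem hw'⟩
    have hν' : π w' = ν • π (u * v) := congrArg Subtype.val hν
    have hker0 : π (w' - ν • (u * v)) = 0 := by
      rw [map_sub, map_smul, hν', sub_self]
    have hz := hkill t ht _ hker0
    rw [mul_sub, sub_eq_zero, mul_smul_comm] at hz
    intro h0
    apply hw'ne
    rw [hz, ← mul_assoc, h0, zero_mul, smul_zero]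
  -- homogeneous basis of B and lifts
  have hint : DirectSum.IsInternal ℬ := DirectSum.Decomposition.isInternal ℬ
  let bB : ∀ n : ℕ, Module.Basis (Fin (Module.finrank k (ℬ n))) k (ℬ n) := fun n =>
    Module.finBasis k (ℬ n)
  let bb : Module.Basis (Σ n : ℕ, Fin (Module.finrank k (ℬ n))) k B := hint.collectedBasis bB
  have hbbmem : ∀ α : (Σ n : ℕ, Fin (Module.finrank k (ℬ n))), bb α ∈ ℬ α.1 :=
    fun α => hint.collectedBasis_mem bB α
  have hbbcoe : ∀ α : (Σ n : ℕ, Fin (Module.finrank k (ℬ n))), bb α = (bB α.1 α.2 : B) :=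
    fun α => congrFun (hint.collectedBasis_coe bB) α
  obtain ⟨cc, hccmem, hccπ⟩ :
      ∃ cc : (Σ n : ℕ, Fin (Module.finrank k (ℬ n))) → C,
        (∀ α, cc α ∈ 𝒞 α.1) ∧ (∀ α, π (cc α) = bb α) := by
    have h := fun α : (Σ n : ℕ, Fin (Module.finrank k (ℬ n))) =>
      hπsurj α.1 (bb α) (hbbmem α)
    choose cc h1 h2 using h
    exact ⟨cc, h1, h2⟩
  -- the lifts generate C as an A-module
  set N : Submodule A C := Submodule.span A (Set.range cc) with hN
  have hNk : ∀ (μ : k) {x : C}, x ∈ N → μ • x ∈ N := by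
    intro μ x hx
    rw [← hks]; exact N.smul_mem _ hx
  have hspan : ∀ n, ∀ x ∈ 𝒞 n, x ∈ N := by
    intro n
    induction n using Nat.strong_induction_on with
    | _ n ih =>
      intro x hx
      have hπx : π x ∈ ℬ n := hπmem hx
      set μ : Fin (Module.finrank k (ℬ n)) → k := fun i => (bB n).repr ⟨π x, hπx⟩ i with hμ
      have hrepr : π x = ∑ i, μ i • (bB n i : B) := by
        have h1 := (bB n).sum_repr ⟨π x, hπx⟩
        calc π x = ((∑ i, μ i • bB n i : ℬ n) : B) := by rw [h1]
          _ = ∑ i, μ i • (bB n i : B) := by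
              rw [Submodule.coe_sum]
              exact Finset.sum_congr rfl fun i _ => rfl
      set x' : C := x - ∑ i, μ i • cc ⟨n, i⟩ with hx'
      have hx'mem : x' ∈ 𝒞 n := by
        refine Submodule.sub_mem _ hx (Submodule.sum_mem _ fun i _ => Submodule.smul_mem _ _ ?_)
        exact hccmem ⟨n, i⟩
      have hπx' : π x' = 0 := by
        rw [hx', map_sub, map_sum, sub_eq_zero, hrepr]
        refine Finset.sum_congr rfl fun i _ => ?_
        rw [map_smul, hccπ, hbbcoe]
      have hx'N : x' ∈ N := by
        have h1 := hkercomp x' hπx' n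
        rw [DirectSum.decompose_of_mem_same 𝒞 hx'mem] at h1
        refine Submodule.span_induction (p := fun w _ => w ∈ N) ?_ ?_ ?_ ?_ h1
        · rintro w ⟨m, hm0, hmn, a, ha, y, hy, rfl⟩
          have hy' : y ∈ N := ih (n - m) (by omega) y hy
          have h2 := N.smul_mem a hy'
          rwa [hsmul] at h2
        · exact N.zero_mem
        · intro y z _ _ hy hz; exact N.add_mem hy hz
        · intro μ' y _ hy; exact hNk μ' hy
      have hxeq : x = x' + ∑ i, μ i • cc ⟨n, i⟩ := by rw [hx', sub_add_cancel]
      rw [hxeq]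
      exact N.add_mem hx'N (Submodule.sum_mem _ fun i _ =>
        hNk (μ i) (Submodule.subset_span ⟨⟨n, i⟩, rfl⟩))
  have hspantop : ∀ x : C, x ∈ N := by
    intro x
    rw [← DirectSum.sum_support_decompose 𝒞 x]
    exact Submodule.sum_mem _ fun i _ => hspan i _ (DirectSum.decompose 𝒞 x i).2
  -- homogeneous linear independence
  have hL2 : ∀ (d : ℕ) (s : Finset (Σ n : ℕ, Fin (Module.finrank k (ℬ n))))
      (a : (Σ n : ℕ, Fin (Module.finrank k (ℬ n))) → A),
      (∀ α ∈ s, a α ∈ 𝒜 (d - α.1) ∧ (a α ≠ 0 → α.1 ≤ d)) →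
      (∑ α ∈ s, ι (a α) * cc α) = 0 → ∀ α ∈ s, a α = 0 := by
    intro d s a ha hsum
    by_contra hcon
    push_neg at hcon
    obtain ⟨β, hβs, hβne⟩ := hcon
    set s' := s.filter (fun α => a α ≠ 0) with hs'
    have hβ' : β ∈ s' := Finset.mem_filter.mpr ⟨hβs, hβne⟩
    obtain ⟨α₀, hα₀s', hmax⟩ := s'.exists_max_image (fun α => α.1) ⟨β, hβ'⟩
    have hα₀s : α₀ ∈ s := (Finset.mem_filter.mp hα₀s').1
    have hα₀ne : a α₀ ≠ 0 := (Finset.mem_filter.mp hα₀s').2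
    have hα₀d : α₀.1 ≤ d := (ha α₀ hα₀s).2 hα₀ne
    have hα₀mem : a α₀ ∈ 𝒜 (d - α₀.1) := (ha α₀ hα₀s).1
    have he : d - α₀.1 ≤ jA := by
      by_contra h
      push_neg at h
      rw [hAtop _ h] at hα₀mem
      exact hα₀ne ((Submodule.mem_bot k).mp hα₀mem)
    obtain ⟨b, hb, htne⟩ := hApair (d - α₀.1) he (a α₀) hα₀mem hα₀ne
    set t := a α₀ * b with htdef
    have htmem : t ∈ 𝒜 jA := by
      have h1 := SetLike.mul_mem_graded hα₀mem hb
      rwa [show (d - α₀.1) + (jA - (d - α₀.1)) = jA by omega] at h1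
    have hsum2 : (∑ α ∈ s, ι (a α * b) * cc α) = 0 := by
      calc ∑ α ∈ s, ι (a α * b) * cc α = (∑ α ∈ s, ι (a α) * cc α) * ι b := by
            rw [Finset.sum_mul]
            refine Finset.sum_congr rfl fun α _ => ?_
            rw [map_mul]; ring
        _ = 0 := by rw [hsum, zero_mul]
    set s'' := s.filter (fun α => a α ≠ 0 ∧ α.1 = α₀.1) with hs''
    have hα₀'' : α₀ ∈ s'' := Finset.mem_filter.mpr ⟨hα₀s, hα₀ne, rfl⟩
    have hcoef : ∀ α, α ∈ s'' → ∃ ν : k, a α * b = ν • t := by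
      intro α hα
      obtain ⟨h3, h1, h2⟩ := Finset.mem_filter.mp hα
      have hmem2 : a α * b ∈ 𝒜 jA := by
        have h4 := SetLike.mul_mem_graded (ha α h3).1 hb
        rw [h2] at h4
        rwa [show (d - α₀.1) + (jA - (d - α₀.1)) = jA by omega] at h4
      obtain ⟨ν, hν⟩ := aux_onedim (V := 𝒜 jA) hA1 (t := ⟨t, htmem⟩)
        (fun h0 => htne (congrArg Subtype.val h0)) ⟨a α * b, hmem2⟩
      exact ⟨ν, congrArg Subtype.val hν⟩
    set ν : (Σ n : ℕ, Fin (Module.finrank k (ℬ n))) → k :=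
      fun α => if h : α ∈ s'' then Classical.choose (hcoef α h) else 0 with hνdef
    have hνprop : ∀ α ∈ s'', a α * b = ν α • t := by
      intro α h
      rw [hνdef]
      simp only [dif_pos h]
      exact Classical.choose_spec (hcoef α h)
    have hzero : ∀ α ∈ s, α ∉ s'' → a α * b = 0 := by
      intro α hαs hαn
      by_cases hane : a α = 0
      · rw [hane, zero_mul]
      · have hα1 : α.1 ≠ α₀.1 := fun h => hαn (Finset.mem_filter.mpr ⟨hαs, hane, h⟩)
        have hαle : α.1 ≤ α₀.1 := hmax α (Finset.mem_filter.mpr ⟨hαs, hane⟩)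
        have hαd : α.1 ≤ d := (ha α hαs).2 hane
        have hmem2 : a α * b ∈ 𝒜 ((d - α.1) + (jA - (d - α₀.1))) :=
          SetLike.mul_mem_graded (ha α hαs).1 hb
        rw [hAtop _ (by omega)] at hmem2
        exact (Submodule.mem_bot k).mp hmem2
    have hs''sub : s'' ⊆ s := Finset.filter_subset _ _
    have hsum3 : ι t * (∑ α ∈ s'', ν α • cc α) = 0 := by
      calc ι t * (∑ α ∈ s'', ν α • cc α)
          = ∑ α ∈ s'', ι (a α * b) * cc α := by
            rw [Finset.mul_sum]
            refine Finset.sum_congr rfl fun α hα => ?_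
            rw [hνprop α hα, map_smul, smul_mul_assoc, mul_smul_comm]
        _ = ∑ α ∈ s, ι (a α * b) * cc α :=
            Finset.sum_subset hs''sub fun α h1 h2 => by rw [hzero α h1 h2, map_zero, zero_mul]
        _ = 0 := hsum2
    set u := ∑ α ∈ s'', ν α • cc α with hu
    have humem : u ∈ 𝒞 α₀.1 := by
      refine Submodule.sum_mem _ fun α hα => Submodule.smul_mem _ _ ?_
      rw [← (Finset.mem_filter.mp hα).2.2]
      exact hccmem α
    have hνα₀ : ν α₀ ≠ 0 := by
      intro h0
      apply htne
      have h1 := hνprop α₀ hα₀''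
      rwa [h0, zero_smul] at h1
    have hπune : π u ≠ 0 := by
      have hπu : π u = ∑ α ∈ s'', ν α • bb α := by
        rw [hu, map_sum]
        exact Finset.sum_congr rfl fun α hα => by rw [map_smul, hccπ]
      intro h0
      rw [hπu] at h0
      exact hνα₀ (linearIndependent_iff'.mp bb.linearIndependent s'' ν h0 α₀ hα₀'')
    exact hL3 α₀.1 u humem hπune t htmem htne hsum3
  -- linear independence over A
  have hli : LinearIndependent A cc := by
    rw [linearIndependent_iff']
    intro s g hg β hβ
    have hcomp : ∀ m, (DirectSum.decompose 𝒜 (g β) m : A) = 0 := by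
      intro m
      set d := m + β.1 with hd
      set a' : (Σ n : ℕ, Fin (Module.finrank k (ℬ n))) → A :=
        fun α => if α.1 ≤ d then (DirectSum.decompose 𝒜 (g α) (d - α.1) : A) else 0 with ha'
      have h00 : (∑ α ∈ s, ι (g α) * cc α) = 0 := by
        rw [← hg]
        exact Finset.sum_congr rfl fun α _ => (hsmul _ _).symm
      have hsum' : (∑ α ∈ s, ι (a' α) * cc α) = 0 := by
        have h0 : (∑ α ∈ s, (DirectSum.decompose 𝒞 (ι (g α) * cc α) d : C)) = 0 := by
          calc ∑ α ∈ s, (DirectSum.decompose 𝒞 (ι (g α) * cc α) d : C)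
              = ((∑ α ∈ s, DirectSum.decompose 𝒞 (ι (g α) * cc α) d : 𝒞 d) : C) :=
                (Submodule.coe_sum _ _ _).symm
            _ = ((DirectSum.decompose 𝒞 (∑ α ∈ s, ι (g α) * cc α) d : 𝒞 d) : C) := by
                rw [DirectSum.decompose_sum, DFinsupp.finset_sum_apply]
            _ = 0 := by rw [h00, DirectSum.decompose_zero]; rfl
        rw [← h0]
        refine Finset.sum_congr rfl fun α _ => ?_
        by_cases hle : α.1 ≤ d
        · rw [DirectSum.coe_decompose_mul_of_right_mem_of_le 𝒞 (hccmem α) hle, hdec, ha']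
          simp only [if_pos hle]
        · rw [DirectSum.coe_decompose_mul_of_right_mem_of_not_le 𝒞 (hccmem α) hle, ha']
          simp only [if_neg hle, map_zero, zero_mul]
      have hhyp : ∀ α ∈ s, a' α ∈ 𝒜 (d - α.1) ∧ (a' α ≠ 0 → α.1 ≤ d) := by
        intro α _
        rw [ha']
        by_cases hle : α.1 ≤ d
        · simp only [if_pos hle]
          exact ⟨(DirectSum.decompose 𝒜 (g α) (d - α.1)).2, fun _ => hle⟩
        · simp only [if_neg hle]
          exact ⟨Submodule.zero_mem _, fun h => absurd rfl h⟩
      have hβ0 := hL2 d s a' hhyp hsum' β hβ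
      rw [ha'] at hβ0
      simp only [if_pos (show β.1 ≤ d by omega)] at hβ0
      rwa [show d - β.1 = m by omega] at hβ0
    calc g β = ∑ i ∈ (DirectSum.decompose 𝒜 (g β)).support,
          (DirectSum.decompose 𝒜 (g β) i : A) := (DirectSum.sum_support_decompose 𝒜 (g β)).symm
      _ = 0 := Finset.sum_eq_zero fun i _ => hcomp i
  let bC : Module.Basis (Σ n : ℕ, Fin (Module.finrank k (ℬ n))) A C :=
    Module.Basis.mk hli (by intro x _; exact hspantop x)
  exact Module.Free.of_basis bC

end
end

section
/- Let A, B, C be finite-dimensional graded k-algebras with A_0 = B_0 = C_0 = k, and let ι : A → C and π : C → B be graded algebra homomorphisms with π surjective. Then the following are equivalent: (iii) ι makes C a free A-module and ker π equals the ideal of C generated by ι(A_+); (iv) ker π equals the ideal of C generated by ι(A_+) and dim_k C = (dim_k A)·(dim_k B). -/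
noncomputable section

variable {k : Type*} [Field k]

private lemma nak_aux {R M : Type*} [CommRing R] [AddCommGroup M] [Module R M]
    {J : Ideal R} (hJ : IsNilpotent J) {N : Submodule R M}
    (h : N ⊔ J • ⊤ = ⊤) : N = ⊤ := by
  obtain ⟨m, hm⟩ := hJ
  have key : ∀ n : ℕ, (⊤ : Submodule R M) ≤ N ⊔ J ^ n • ⊤ := by
    intro n
    induction n with
    | zero => simp [Ideal.one_eq_top, Submodule.top_smul]
    | succ n ih =>
      calc (⊤ : Submodule R M) ≤ N ⊔ J ^ n • ⊤ := ih
        _ = N ⊔ J ^ n • (N ⊔ J • ⊤) := by rw [h]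
        _ = N ⊔ (J ^ n • N ⊔ J ^ n • (J • ⊤)) := by rw [Submodule.smul_sup]
        _ ≤ N ⊔ (N ⊔ J ^ (n + 1) • ⊤) := by
            refine sup_le_sup_left (sup_le_sup Submodule.smul_le_right ?_) N
            rw [pow_succ, mul_smul]
        _ = N ⊔ J ^ (n + 1) • ⊤ := by rw [← sup_assoc, sup_idem]
  have h2 := key m
  rw [hm, show ((0 : Ideal R) • ⊤ : Submodule R M) = ⊥ from by simp, sup_bot_eq, top_le_iff] at h2
  exact h2

private lemma homog_nilpotent {A : Type*} [CommRing A] [Algebra k A] (𝒜 : ℕ → Submodule k A)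
    [GradedAlgebra 𝒜] [FiniteDimensional k A] {i : ℕ} (hi : 0 < i) {a : A} (ha : a ∈ 𝒜 i) :
    IsNilpotent a := by
  by_contra h
  have hne : ∀ m : ℕ, a ^ (m + 1) ≠ 0 := by
    intro m hm; exact h ⟨m + 1, hm⟩
  have hmem : ∀ m : ℕ, a ^ (m + 1) ∈ 𝒜 ((m + 1) * i) := by
    intro m
    simpa [smul_eq_mul] using SetLike.pow_mem_graded (m + 1) ha
  have hind : iSupIndep (fun m : ℕ => 𝒜 ((m + 1) * i)) := by
    refine ((DirectSum.Decomposition.isInternal 𝒜).submodule_iSupIndep).comp ?_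
    intro m n hmn
    exact by
      have := Nat.eq_of_mul_eq_mul_right hi hmn
      omega
  have hli : LinearIndependent k (fun m : ℕ => a ^ (m + 1)) :=
    hind.linearIndependent _ hmem hne
  exact Module.Finite.not_linearIndependent_of_infinite (R := k) _ hli

private lemma finrank_finsupp_eq {K M : Type*} [Field K] [AddCommGroup M] [Module K M]
    [FiniteDimensional K M] (ι : Type*) [Fintype ι] :
    Module.finrank K (ι →₀ M) = Fintype.card ι * Module.finrank K M := by
  classical
  rw [Module.finrank_eq_card_basis (Finsupp.basis (fun _ : ι => Module.finBasis K M))]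
  simp [Fintype.card_sigma, Finset.sum_const, smul_eq_mul]

/-- Lemma 2.4 (iii) ⇔ (iv) ([IMM, Lemma 2.2]).  Let `A, B, C` be finite-dimensional graded
`k`-algebras with `A_0 = B_0 = C_0 = k`, and `ι : A → C`, `π : C → B` graded algebra maps
with `π` surjective.  Then: (`ι` makes `C` a free `A`-module and `ker π` is the ideal of
`C` generated by `ι(A_+)`) if and only if (`ker π` is the ideal of `C` generated by
`ι(A_+)` and `dim_k C = (dim_k A)·(dim_k B)`). -/
theorem coexact_free_iff_dim {A C B : Type*} [CommRing A] [CommRing C] [CommRing B]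
    [Algebra k A] [Algebra k C] [Algebra k B]
    (𝒜 : ℕ → Submodule k A) (𝒞 : ℕ → Submodule k C) (ℬ : ℕ → Submodule k B)
    [GradedAlgebra 𝒜] [GradedAlgebra 𝒞] [GradedAlgebra ℬ]
    [FiniteDimensional k A] [FiniteDimensional k C] [FiniteDimensional k B]
    (hA0 : 𝒜 0 = 1) (hC0 : 𝒞 0 = 1) (hB0 : ℬ 0 = 1)
    -- graded algebra homomorphisms ι : A → C and π : C → B, with π surjective
    (ι : A →ₐ[k] C) (hιgr : ∀ i, (𝒜 i).map ι.toLinearMap ≤ 𝒞 i)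
    (π : C →ₐ[k] B) (hπgr : ∀ i, (𝒞 i).map π.toLinearMap ≤ ℬ i)
    (hsurj : Function.Surjective π) :
    (freeVia ι.toRingHom ∧
        RingHom.ker π = Ideal.span (⇑ι '' {a | ∃ i, 0 < i ∧ a ∈ 𝒜 i}))
      ↔ (RingHom.ker π = Ideal.span (⇑ι '' {a | ∃ i, 0 < i ∧ a ∈ 𝒜 i}) ∧
        Module.finrank k C = Module.finrank k A * Module.finrank k B) := by
  classical
  set S : Set A := {a | ∃ i, 0 < i ∧ a ∈ 𝒜 i} with hSdef
  set I : Ideal C := Ideal.span (⇑ι '' S) with hIdef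
  suffices h : RingHom.ker (π : C →+* B) = I →
      (freeVia ι.toRingHom ↔
        Module.finrank k C = Module.finrank k A * Module.finrank k B) by
    constructor
    · rintro ⟨hf, hker⟩; exact ⟨hker, (h hker).1 hf⟩
    · rintro ⟨hker, hd⟩; exact ⟨(h hker).2 hd, hker⟩
  intro hker
  -- the `A`-module structure on `C` given by `ι`
  letI : Module A C := Module.compHom C ι.toRingHom
  have hsmul_eq : ∀ (a : A) (c : C), a • c = ι a * c := fun a c => rfl
  haveI hTower : IsScalarTower k A C := ⟨fun x a c => by
    rw [hsmul_eq, hsmul_eq, map_smul, smul_mul_assoc]⟩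
  -- dimension of B via the quotient C ⧸ I
  have hdimB : Module.finrank k B = Module.finrank k (C ⧸ I) := by
    rw [← hker]
    exact ((Ideal.quotientKerAlgEquivOfSurjective hsurj).toLinearEquiv.finrank_eq).symm
  haveI : FiniteDimensional k (C ⧸ I) :=
    Module.Finite.of_surjective (Ideal.Quotient.mkₐ k I).toLinearMap
      (Ideal.Quotient.mkₐ_surjective k I)
  by_cases hCtriv : Subsingleton C
  · haveI := hCtriv
    haveI : Subsingleton B := hsurj.subsingleton
    have hB0' : Module.finrank k B = 0 := Module.finrank_zero_of_subsingleton
    have hC0' : Module.finrank k C = 0 := Module.finrank_zero_of_subsingleton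
    constructor
    · intro _; rw [hB0', hC0', mul_zero]
    · intro _
      show Module.Free A C
      infer_instance
  haveI : Nontrivial C := not_subsingleton_iff_nontrivial.mp hCtriv
  haveI : Nontrivial A :=
    ⟨⟨0, 1, fun h01 => one_ne_zero (α := C) (by rw [← map_one ι, ← h01, map_zero])⟩⟩
  set J : Ideal A := Ideal.span S with hJdef
  -- J is nilpotent
  have hJle : J ≤ nilradical A := by
    rw [Ideal.span_le]
    rintro s ⟨i, hi, hs⟩
    exact mem_nilradical.mpr (homog_nilpotent 𝒜 hi hs)
  haveI : IsNoetherianRing A :=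
    isNoetherianRing_iff.mpr (isNoetherian_of_tower k (inferInstance : IsNoetherian k A))
  have hJnil : IsNilpotent J := by
    obtain ⟨m, hm⟩ := IsNoetherianRing.isNilpotent_nilradical A
    refine ⟨m, ?_⟩
    have h1 : J ^ m ≤ nilradical A ^ m := Ideal.pow_right_mono hJle m
    rw [hm] at h1
    exact le_bot_iff.mp h1
  -- 1 ∉ J
  have h1J : (1 : A) ∉ J := by
    intro h1
    have hker0 : J ≤ RingHom.ker (GradedRing.projZeroRingHom 𝒜) := by
      rw [Ideal.span_le]
      rintro s ⟨i, hi, hs⟩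
      simp only [SetLike.mem_coe, RingHom.mem_ker]
      show (DirectSum.decompose 𝒜 s 0 : A) = 0
      rw [DirectSum.decompose_of_mem_ne 𝒜 hs hi.ne']
    have := hker0 h1
    rw [RingHom.mem_ker, map_one] at this
    exact one_ne_zero this
  -- decomposition of elements of A
  have hdecomp : ∀ a : A, ∃ (lam : k) (j : A), j ∈ J ∧ a = algebraMap k A lam + j := by
    intro a
    have htop : (⊤ : Submodule k A) ≤ 𝒜 0 ⊔ (J : Submodule A A).restrictScalars k := by
      rw [← (DirectSum.Decomposition.isInternal 𝒜).submodule_iSup_eq_top]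
      refine iSup_le fun i => ?_
      rcases Nat.eq_zero_or_pos i with hi | hi
      · subst hi; exact le_sup_left
      · refine le_trans ?_ le_sup_right
        intro x hx
        exact Ideal.subset_span ⟨i, hi, hx⟩
    obtain ⟨a0, ha0, j, hj, hsum⟩ := Submodule.mem_sup.mp (htop Submodule.mem_top)
    rw [hA0] at ha0
    obtain ⟨lam, hlam⟩ := Submodule.mem_one.mp ha0
    exact ⟨lam, j, hj, by rw [hlam, hsum]⟩
  -- I coincides with J • ⊤ as sets
  have hmulJ : ∀ (c x : C), x ∈ (J • ⊤ : Submodule A C) → c * x ∈ (J • ⊤ : Submodule A C) := by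
    intro c x hx
    refine Submodule.smul_induction_on hx (fun a ha m _ => ?_)
      (fun u v hu hv => by rw [mul_add]; exact add_mem hu hv)
    have hca : c * (a • m) = a • (c * m) := by rw [hsmul_eq, hsmul_eq]; ring
    rw [hca]
    exact Submodule.smul_mem_smul ha Submodule.mem_top
  have hIJ : ∀ x : C, x ∈ I ↔ x ∈ (J • ⊤ : Submodule A C) := by
    intro x
    constructor
    · intro hx
      refine Submodule.span_induction ?_ ?_ ?_ ?_ hx
      · rintro y ⟨s, hsS, rfl⟩
        have h1 : ι s = s • (1 : C) := by rw [hsmul_eq, mul_one]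
        rw [h1]
        exact Submodule.smul_mem_smul (Ideal.subset_span hsS) Submodule.mem_top
      · exact zero_mem _
      · intro u v _ _ hu hv; exact add_mem hu hv
      · intro c y _ hy; exact hmulJ c y hy
    · intro hx
      refine Submodule.smul_induction_on hx (fun a ha m _ => ?_)
        (fun u v hu hv => add_mem hu hv)
      rw [hsmul_eq]
      have hιa : ι a ∈ I := by
        have : ι a ∈ Ideal.map (ι : A →+* C) J := Ideal.mem_map_of_mem _ ha
        rwa [hJdef, Ideal.map_span] at this
      exact Ideal.mul_mem_right m I hιa
  constructor
  · -- (iii) → (iv) : free ⇒ dimension formula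
    intro hfree
    haveI hfree' : Module.Free A C := hfree
    haveI : Module.Finite A C := Module.Finite.of_restrictScalars_finite k A C
    set ι' := Module.Free.ChooseBasisIndex A C
    set b : Module.Basis ι' A C := Module.Free.chooseBasis A C with hbdef
    have hCdim : Module.finrank k C = Fintype.card ι' * Module.finrank k A := by
      rw [(b.repr.restrictScalars k).finrank_eq, finrank_finsupp_eq]
    have hrepr : ∀ x ∈ (J • ⊤ : Submodule A C), ∀ i, b.repr x i ∈ J := by
      intro x hx
      refine Submodule.smul_induction_on hx ?_ ?_
      · intro a ha m _ i
        rw [map_smul, Finsupp.smul_apply, smul_eq_mul]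
        exact J.mul_mem_right _ ha
      · intro u v hu hv i
        rw [map_add, Finsupp.add_apply]
        exact add_mem (hu i) (hv i)
    set y : ι' → C ⧸ I := fun i => Ideal.Quotient.mkₐ k I (b i) with hydef
    have hmk_smul : ∀ (lam : k) (c : C),
        Ideal.Quotient.mkₐ k I (lam • c) = lam • Ideal.Quotient.mkₐ k I c :=
      fun lam c => map_smul _ _ _
    have hyli : LinearIndependent k y := by
      rw [Fintype.linearIndependent_iff]
      intro g hg i
      have hz : (∑ j, g j • b j) ∈ I := by
        have : Ideal.Quotient.mkₐ k I (∑ j, g j • b j) = 0 := by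
          rw [map_sum]
          simp_rw [hmk_smul]
          exact hg
        exact Ideal.Quotient.eq_zero_iff_mem.mp this
      have hJi : b.repr (∑ j, g j • b j) i ∈ J := hrepr _ ((hIJ _).mp hz) i
      have hri : b.repr (∑ j, g j • b j) i = algebraMap k A (g i) := by
        rw [map_sum, Finsupp.finset_sum_apply]
        have : ∀ j, (b.repr (g j • b j)) i = if j = i then algebraMap k A (g j) else 0 := by
          intro j
          rw [show g j • b j = (algebraMap k A (g j)) • b j from (algebraMap_smul A (g j) (b j)).symm,
            map_smul, Finsupp.smul_apply, Module.Basis.repr_self, smul_eq_mul]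
          by_cases hji : j = i
          · subst hji; rw [Finsupp.single_eq_same, mul_one, if_pos rfl]
          · rw [Finsupp.single_eq_of_ne' hji, mul_zero, if_neg hji]
        rw [Finset.sum_congr rfl fun j _ => this j, Finset.sum_ite_eq' Finset.univ i
          (fun j => algebraMap k A (g j)), if_pos (Finset.mem_univ i)]
      rw [hri] at hJi
      by_contra hgi
      refine h1J ?_
      have hmul := J.mul_mem_left (algebraMap k A (g i)⁻¹) hJi
      rwa [← map_mul, inv_mul_cancel₀ hgi, map_one] at hmul
    have hyspan : ⊤ ≤ Submodule.span k (Set.range y) := by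
      intro q _
      obtain ⟨c, rfl⟩ := Ideal.Quotient.mkₐ_surjective k I q
      choose lam jj hjJ hcoef using fun i => hdecomp (b.repr c i)
      have hdiff : c - ∑ i, lam i • b i ∈ I := by
        have heq : c - ∑ i, lam i • b i = ∑ i, jj i • b i := by
          conv_lhs => rw [← b.sum_repr c]
          rw [← Finset.sum_sub_distrib]
          refine Finset.sum_congr rfl fun i _ => ?_
          rw [hcoef i, add_smul, algebraMap_smul]
          abel
        rw [heq]
        refine (hIJ _).mpr ?_
        exact Submodule.sum_mem _ fun i _ =>
          Submodule.smul_mem_smul (hjJ i) Submodule.mem_top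
      have hmkeq : Ideal.Quotient.mkₐ k I c = ∑ i, lam i • y i := by
        have : Ideal.Quotient.mkₐ k I (c - ∑ i, lam i • b i) = 0 :=
          Ideal.Quotient.eq_zero_iff_mem.mpr hdiff
        rw [map_sub, sub_eq_zero] at this
        rw [this, map_sum]
        exact Finset.sum_congr rfl fun i _ => hmk_smul _ _
      rw [hmkeq]
      exact Submodule.sum_mem _ fun i _ =>
        Submodule.smul_mem _ _ (Submodule.subset_span ⟨i, rfl⟩)
    have hQdim : Module.finrank k (C ⧸ I) = Fintype.card ι' :=
      Module.finrank_eq_card_basis (Module.Basis.mk hyli hyspan)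
    rw [hCdim, hdimB, hQdim, mul_comm]
  · -- (iv) → (iii) : dimension formula ⇒ free
    intro hdim
    set n := Module.finrank k (C ⧸ I) with hndef
    set b2 : Module.Basis (Fin n) k (C ⧸ I) := Module.finBasis k (C ⧸ I) with hb2def
    choose x hx using fun i => Ideal.Quotient.mkₐ_surjective k I (b2 i)
    have hspanA : Submodule.span A (Set.range x) = ⊤ := by
      apply nak_aux hJnil
      rw [eq_top_iff]
      intro c _
      have hq : Ideal.Quotient.mkₐ k I c ∈
          Submodule.map (Ideal.Quotient.mkₐ k I).toLinearMap (Submodule.span k (Set.range x)) := by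
        rw [Submodule.map_span, ← Set.range_comp]
        have himg : (⇑(Ideal.Quotient.mkₐ k I).toLinearMap ∘ x) = ⇑b2 := funext fun i => hx i
        rw [himg, b2.span_eq]
        exact Submodule.mem_top
      obtain ⟨c', hc', hcc⟩ := hq
      have hdiff : c - c' ∈ I := by
        have hcc' : Ideal.Quotient.mkₐ k I c' = Ideal.Quotient.mkₐ k I c := hcc
        have : Ideal.Quotient.mkₐ k I (c - c') = 0 := by
          rw [map_sub, hcc', sub_self]
        exact Ideal.Quotient.eq_zero_iff_mem.mp this
      have hc'mem : c' ∈ Submodule.span A (Set.range x) :=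
        Submodule.span_le_restrictScalars k A (Set.range x) hc'
      have : c = c' + (c - c') := by ring
      rw [this]
      exact add_mem (le_sup_left (α := Submodule A C) hc'mem)
        (le_sup_right (α := Submodule A C) ((hIJ _).mp hdiff))
    set φ : (Fin n →₀ A) →ₗ[A] C := Finsupp.linearCombination A x with hφdef
    have hφsurj : Function.Surjective φ := by
      rw [← LinearMap.range_eq_top, Finsupp.range_linearCombination, hspanA]
    set φk : (Fin n →₀ A) →ₗ[k] C := LinearMap.restrictScalars k φ with hφkdef
    have hdim2 : Module.finrank k (Fin n →₀ A) = Module.finrank k C := by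
      rw [finrank_finsupp_eq, Fintype.card_fin, hdim, hdimB, mul_comm]
    have hinj : Function.Injective φk := by
      have h1 := LinearMap.finrank_range_add_finrank_ker φk
      have hr : LinearMap.range φk = ⊤ := by
        rw [LinearMap.range_eq_top]
        exact hφsurj
      rw [hr, finrank_top, hdim2] at h1
      have hker0 : Module.finrank k (LinearMap.ker φk) = 0 := by omega
      rw [← LinearMap.ker_eq_bot (M := (Fin n →₀ A)) (f := φk)]
      exact Submodule.finrank_eq_zero.mp hker0
    have hφinj : Function.Injective φ := hinj
    show Module.Free A C
    exact Module.Free.of_equiv (LinearEquiv.ofBijective φ ⟨hφinj, hφsurj⟩)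

end
end
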